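/- arXiv:1605.05204 — 7 statements merged into one kernel-verified Lean document; each statement's English description precedes it below -/
import Mathlib

section
/- Let θ be an arithmetic function with θ(1) ≥ 2 and θ(n) ≥ P⁺(n) for n ≥ 2, where P⁺(n) is the largest prime factor of n. Let 𝔅 be the set of positive integers containing 1 and all n ≥ 2 with prime factorization n = p₁^{α₁}⋯p_k^{α_k}, p₁ < ⋯ < p_k, satisfying p_{j+1} ≤ θ(p₁^{α₁}⋯p_j^{α_j}) for 0 ≤ j < k (empty product = 1). Let 𝔇 be the set of positive integers containing 1 and all n ≥ 2 whose divisors 1 = d₁ < d₂ < ⋯ < d_{τ(n)} = n satisfy d_{j+1} ≤ θ(d_j) for 1 ≤ j < τ(n). Then 𝔇 ⊆ 𝔅. -/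
open scoped Classical ENNReal

noncomputable section

/-- Largest prime factor of `n` (0 for `n = 1`). -/
def maxPrimeFac (n : ℕ) : ℕ := n.primeFactors.sup id

/-- Validity conditions (3) on `θ`: `θ(1) ≥ 2` and `θ(n) ≥ P⁺(n)` for `n ≥ 2`. -/
def ThetaOK (θ : ℕ → ℝ≥0∞) : Prop :=
  2 ≤ θ 1 ∧ ∀ n, 2 ≤ n → (maxPrimeFac n : ℝ≥0∞) ≤ θ n

/-- Membership in `𝔅`: `n ≥ 1` and each prime `p` of `n` satisfies
`p ≤ θ(prefix of the factorization of n below p)`. -/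
def Bmem (θ : ℕ → ℝ≥0∞) (n : ℕ) : Prop :=
  0 < n ∧ ∀ p ∈ n.primeFactors,
    (p : ℝ≥0∞) ≤ θ (∏ q ∈ n.primeFactors.filter (fun q => q < p), q ^ (n.factorization q))

/-- Membership in `𝔇`: `n ≥ 1` and each divisor `d < n` of `n` is followed by a
divisor `e` of `n` with `d < e ≤ θ(d)`. -/
def Dmem (θ : ℕ → ℝ≥0∞) (n : ℕ) : Prop :=
  0 < n ∧ ∀ d, d ∣ n → d < n → ∃ e, e ∣ n ∧ d < e ∧ (e : ℝ≥0∞) ≤ θ d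

end

lemma prod_pow_fac_dvd (n : ℕ) (s : Finset ℕ) (hs : ∀ q ∈ s, q.Prime) :
    ∏ q ∈ s, q ^ n.factorization q ∣ n := by
  rcases eq_or_ne n 0 with rfl | hn
  · exact dvd_zero _
  induction s using Finset.induction with
  | empty => simpa using one_dvd n
  | @insert a s ha ih =>
    rw [Finset.prod_insert ha]
    have hap : a.Prime := hs a (Finset.mem_insert_self a s)
    have h1 : a ^ n.factorization a ∣ n := Nat.ordProj_dvd n a
    have h2 : ∏ q ∈ s, q ^ n.factorization q ∣ n :=
      ih (fun q hq => hs q (Finset.mem_insert_of_mem hq))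
    have hcop : Nat.Coprime (a ^ n.factorization a) (∏ q ∈ s, q ^ n.factorization q) := by
      apply Nat.Coprime.pow_left
      apply Nat.Coprime.prod_right
      intro q hq
      exact Nat.Coprime.pow_right _
        ((Nat.coprime_primes hap (hs q (Finset.mem_insert_of_mem hq))).mpr
          (fun h => ha (h ▸ hq)))
    exact hcop.mul_dvd_of_dvd_of_dvd h1 h2

theorem stmt0 (θ : ℕ → ℝ≥0∞) (hθ : ThetaOK θ) (n : ℕ) (hn : Dmem θ n) : Bmem θ n := by
  obtain ⟨hn0, hD⟩ := hn
  refine ⟨hn0, ?_⟩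
  intro p hp
  have hpprime : p.Prime := Nat.prime_of_mem_primeFactors hp
  set s := n.primeFactors.filter (fun q => q < p) with hsdef
  set m := ∏ q ∈ s, q ^ n.factorization q with hmdef
  have hsprime : ∀ q ∈ s, q.Prime := fun q hq =>
    Nat.prime_of_mem_primeFactors (Finset.mem_of_mem_filter q hq)
  have hmdvd : m ∣ n := prod_pow_fac_dvd n s hsprime
  have hnne : n ≠ 0 := hn0.ne'
  have hmpos : 0 < m := by
    apply Finset.prod_pos
    intro q hq
    exact pow_pos (hsprime q hq).pos _
  -- p does not divide m
  have hpnm : ¬ p ∣ m := by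
    intro hdvd
    obtain ⟨q, hq, hpq⟩ := hpprime.prime.exists_mem_finset_dvd hdvd
    have : p = q := (Nat.prime_dvd_prime_iff_eq hpprime (hsprime q hq)).mp
      (hpprime.dvd_of_dvd_pow hpq)
    have hqlt : q < p := (Finset.mem_filter.mp hq).2
    omega
  have hmlt : m < n := by
    rcases lt_or_eq_of_le (Nat.le_of_dvd hn0 hmdvd) with h | h
    · exact h
    · exact absurd (h ▸ Nat.dvd_of_mem_primeFactors hp) hpnm
  obtain ⟨e, hedvd, hme, heθ⟩ := hD m hmdvd hmlt
  have hene : e ≠ 0 := by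
    rintro rfl
    omega
  -- some prime factor of e is ≥ p
  by_cases hcase : ∀ q ∈ e.primeFactors, q < p
  · -- then e ∣ m, contradicting m < e
    exfalso
    have hsub : e.primeFactors ⊆ s := by
      intro q hq
      refine Finset.mem_filter.mpr ⟨?_, hcase q hq⟩
      exact Nat.mem_primeFactors.mpr ⟨Nat.prime_of_mem_primeFactors hq,
        (Nat.dvd_of_mem_primeFactors hq).trans hedvd, hnne⟩
    have hfle : e.factorization ≤ n.factorization :=
      (Nat.factorization_le_iff_dvd hene hnne).mpr hedvd
    have h1 : e = ∏ q ∈ e.primeFactors, q ^ e.factorization q := by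
      conv_lhs => rw [← Nat.factorization_prod_pow_eq_self hene]
      rfl
    have h2 : ∏ q ∈ e.primeFactors, q ^ e.factorization q ∣
        ∏ q ∈ e.primeFactors, q ^ n.factorization q :=
      Finset.prod_dvd_prod_of_dvd _ _ (fun q _ =>
        pow_dvd_pow q (hfle q))
    have h3 : ∏ q ∈ e.primeFactors, q ^ n.factorization q ∣ m := by
      rw [hmdef]
      exact Finset.prod_dvd_prod_of_subset _ _ _ hsub
    have : e ∣ m := h1 ▸ (h2.trans h3)
    exact absurd (Nat.le_of_dvd hmpos this) (not_le.mpr hme)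
  · push_neg at hcase
    obtain ⟨q, hq, hpq⟩ := hcase
    have hqe : q ≤ e := Nat.le_of_dvd (Nat.pos_of_ne_zero hene)
      (Nat.dvd_of_mem_primeFactors hq)
    have hpe : p ≤ e := le_trans hpq hqe
    calc (p : ℝ≥0∞) ≤ (e : ℝ≥0∞) := by exact_mod_cast hpe
      _ ≤ θ m := heθ
end

section
/- Let θ be an arithmetic function with θ(1) ≥ 2, θ(n) ≥ P⁺(n) for n ≥ 2, and suppose θ satisfies θ(n) ≤ θ(n+1) for all n ≥ 1 and m·θ(n) ≤ θ(mn) for all coprime m, n ≥ 1. Then the set 𝔅 of integers n whose prime factorization n = p₁^{α₁}⋯p_k^{α_k} (p₁ < ⋯ < p_k) satisfies p_{j+1} ≤ θ(p₁^{α₁}⋯p_j^{α_j}) for 0 ≤ j < k equals the set 𝔇 of integers n whose divisors 1 = d₁ < ⋯ < d_{τ(n)} = n satisfy d_{j+1} ≤ θ(d_j) for 1 ≤ j < τ(n). -/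
open scoped Classical ENNReal

noncomputable section

namespace StmtAux

/-- The prefix of the factorization of `n` below `p`. -/
def pb (n p : ℕ) : ℕ :=
  ∏ q ∈ n.primeFactors.filter (fun q => q < p), q ^ (n.factorization q)

lemma pb_pos (n p : ℕ) : 0 < pb n p :=
  Finset.prod_pos fun q hq =>
    pow_pos (Nat.pos_of_mem_primeFactors (Finset.mem_of_mem_filter q hq)) _

lemma pb_factorization (n : ℕ) (hn : n ≠ 0) (p r : ℕ) :
    (pb n p).factorization r
      = if r ∈ n.primeFactors ∧ r < p then n.factorization r else 0 := by
  unfold pb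
  rw [Nat.factorization_prod (fun q hq =>
    pow_ne_zero _ (Nat.pos_of_mem_primeFactors (Finset.mem_of_mem_filter q hq)).ne')]
  rw [Finset.sum_apply']
  have h : ∀ q ∈ n.primeFactors.filter (fun q => q < p),
      ((q ^ n.factorization q).factorization) r
        = if q = r then n.factorization q else 0 := by
    intro q hq
    rw [Nat.Prime.factorization_pow (Nat.prime_of_mem_primeFactors (Finset.mem_of_mem_filter q hq))]
    simp [Finsupp.single_apply]
  rw [Finset.sum_congr rfl h, Finset.sum_ite_eq']
  simp [Finset.mem_filter, and_assoc]

lemma mem_pf_iff (n : ℕ) (hn : n ≠ 0) (r : ℕ) :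
    r ∈ n.primeFactors ↔ n.factorization r ≠ 0 := by
  rw [← Nat.support_factorization, Finsupp.mem_support_iff]

lemma pb_dvd (n : ℕ) (hn : n ≠ 0) (p : ℕ) : pb n p ∣ n := by
  rw [← Nat.factorization_le_iff_dvd (pb_pos n p).ne' hn, Finsupp.le_def]
  intro r
  rw [pb_factorization n hn]
  split <;> simp

lemma not_dvd_pb (n : ℕ) (hn : n ≠ 0) (p : ℕ) (hp : p.Prime) : ¬ p ∣ pb n p := by
  rw [Nat.Prime.dvd_iff_one_le_factorization hp (pb_pos n p).ne', pb_factorization n hn]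
  simp

lemma coprime_pb (n : ℕ) (hn : n ≠ 0) (p : ℕ) (hp : p.Prime) : Nat.Coprime p (pb n p) :=
  (Nat.Prime.coprime_iff_not_dvd hp).mpr (not_dvd_pb n hn p hp)

lemma pb_lt (n : ℕ) (hn : n ≠ 0) (p : ℕ) (hp : p ∈ n.primeFactors) : pb n p < n := by
  refine lt_of_le_of_ne (Nat.le_of_dvd (Nat.pos_of_ne_zero hn) (pb_dvd n hn p)) ?_
  intro h
  refine not_dvd_pb n hn p (Nat.prime_of_mem_primeFactors hp) ?_
  rw [h]
  exact Nat.dvd_of_mem_primeFactors hp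

lemma dvd_pb (n : ℕ) (hn : n ≠ 0) (p e : ℕ) (he : e ∣ n)
    (hsmall : ∀ q ∈ e.primeFactors, q < p) : e ∣ pb n p := by
  have he0 : e ≠ 0 := ne_zero_of_dvd_ne_zero hn he
  rw [← Nat.factorization_le_iff_dvd he0 (pb_pos n p).ne', Finsupp.le_def]
  intro r
  rw [pb_factorization n hn]
  by_cases hr : r ∈ e.primeFactors
  · have h1 : r ∈ n.primeFactors :=
      Nat.mem_primeFactors.mpr ⟨Nat.prime_of_mem_primeFactors hr,
        (Nat.dvd_of_mem_primeFactors hr).trans he, hn⟩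
    rw [if_pos ⟨h1, hsmall r hr⟩]
    exact (Nat.factorization_le_iff_dvd he0 hn).mpr he r
  · have h0 : e.factorization r = 0 := by
      by_contra h
      exact hr ((mem_pf_iff e he0 r).mpr h)
    simp [h0]

lemma mem_pf_pb (n : ℕ) (hn : n ≠ 0) (p r : ℕ) :
    r ∈ (pb n p).primeFactors ↔ r ∈ n.primeFactors ∧ r < p := by
  rw [mem_pf_iff _ (pb_pos n p).ne', pb_factorization n hn]
  constructor
  · intro h
    by_contra hc
    rw [if_neg hc] at h
    exact h rfl
  · intro h
    rw [if_pos h]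
    exact ((mem_pf_iff n hn r).mp h.1)

lemma pb_mul_pow (n : ℕ) (hn : n ≠ 0) (p : ℕ) (hp : p ∈ n.primeFactors)
    (hmax : ∀ q ∈ n.primeFactors, q ≤ p) :
    pb n p * p ^ n.factorization p = n := by
  have h1 : n = ∏ q ∈ n.primeFactors, q ^ n.factorization q := by
    conv_lhs => rw [← Nat.factorization_prod_pow_eq_self hn]
    rw [Nat.prod_factorization_eq_prod_primeFactors]
  have h2 : n.primeFactors.filter (fun q => ¬ q < p) = {p} := by
    ext q
    simp only [Finset.mem_filter, Finset.mem_singleton, not_lt]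
    constructor
    · rintro ⟨hq, hpq⟩
      exact le_antisymm (hmax q hq) hpq
    · rintro rfl
      exact ⟨hp, le_refl _⟩
  conv_rhs => rw [h1, ← Finset.prod_filter_mul_prod_filter_not n.primeFactors (fun q => q < p)]
  rw [h2, Finset.prod_singleton]
  rfl

lemma Bmem_pb (θ : ℕ → ℝ≥0∞) (n : ℕ) (hB : Bmem θ n) (p : ℕ)
    (hp : p ∈ n.primeFactors) : Bmem θ (pb n p) := by
  have hn : n ≠ 0 := hB.1.ne'
  refine ⟨pb_pos n p, ?_⟩
  intro q hq
  obtain ⟨hqn, hqp⟩ := (mem_pf_pb n hn p q).mp hq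
  have hsets : (pb n p).primeFactors.filter (fun r => r < q)
      = n.primeFactors.filter (fun r => r < q) := by
    ext r
    simp only [Finset.mem_filter, mem_pf_pb n hn p r]
    constructor
    · rintro ⟨⟨h1, _⟩, h3⟩; exact ⟨h1, h3⟩
    · rintro ⟨h1, h3⟩; exact ⟨⟨h1, h3.trans hqp⟩, h3⟩
  have hprod : (∏ r ∈ (pb n p).primeFactors.filter (fun r => r < q),
        r ^ ((pb n p).factorization r))
      = ∏ r ∈ n.primeFactors.filter (fun r => r < q), r ^ (n.factorization r) := by
    rw [hsets]
    refine Finset.prod_congr rfl ?_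
    intro r hr
    obtain ⟨hrn, hrq⟩ := Finset.mem_filter.mp hr
    rw [pb_factorization n hn, if_pos ⟨hrn, hrq.trans hqp⟩]
  rw [hprod]
  exact hB.2 q hqn

end StmtAux

open StmtAux in
theorem stmt1 (θ : ℕ → ℝ≥0∞) (hθ : ThetaOK θ)
    (hmono : ∀ n, 1 ≤ n → θ n ≤ θ (n + 1))
    (hmul : ∀ m n, 1 ≤ m → 1 ≤ n → Nat.Coprime m n → (m : ℝ≥0∞) * θ n ≤ θ (m * n)) :
    ∀ n, Bmem θ n ↔ Dmem θ n := by
  have thetaMono : ∀ a b : ℕ, 1 ≤ a → a ≤ b → θ a ≤ θ b := by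
    intro a b ha hab
    induction b, hab using Nat.le_induction with
    | base => exact le_refl _
    | succ b hb ih => exact ih.trans (hmono b (ha.trans hb))
  have BtoD : ∀ n, Bmem θ n → Dmem θ n := by
    intro n
    induction n using Nat.strong_induction_on with
    | _ n ih =>
    intro hB
    refine ⟨hB.1, ?_⟩
    intro d hdvd hdlt
    have hn0 : n ≠ 0 := hB.1.ne'
    have hd0 : d ≠ 0 := by
      rintro rfl
      exact absurd (Nat.eq_zero_of_zero_dvd hdvd) hn0
    have hn2 : 2 ≤ n := lt_of_le_of_lt (Nat.one_le_iff_ne_zero.mpr hd0) hdlt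
    have hpf : n.primeFactors.Nonempty := Nat.nonempty_primeFactors.mpr hn2
    set p := n.primeFactors.max' hpf with hpdef
    have hp : p ∈ n.primeFactors := Finset.max'_mem _ _
    have hmax : ∀ q ∈ n.primeFactors, q ≤ p := fun q hq => Finset.le_max' _ q hq
    have hpp : p.Prime := Nat.prime_of_mem_primeFactors hp
    set α := n.factorization p with hαdef
    set m := pb n p with hmdef
    have hmeq : m * p ^ α = n := pb_mul_pow n hn0 p hp hmax
    have hm0 : 0 < m := pb_pos n p
    have hcop : Nat.Coprime p m := coprime_pb n hn0 p hpp
    have hmlt : m < n := pb_lt n hn0 p hp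
    have hBm : Bmem θ m := Bmem_pb θ n hB p hp
    have hDm : Dmem θ m := ih m hmlt hBm
    have hpθ : (p : ℝ≥0∞) ≤ θ m := hB.2 p hp
    set i := d.factorization p with hidef
    set f := ordCompl[p] d with hfdef
    have hdf : p ^ i * f = d := Nat.ordProj_mul_ordCompl_eq_self d p
    have hfd : f ∣ d := Nat.ordCompl_dvd d p
    have hpdf : ¬ p ∣ f := Nat.not_dvd_ordCompl hpp hd0
    have hcopf : Nat.Coprime p f := (Nat.Prime.coprime_iff_not_dvd hpp).mpr hpdf
    have hfm : f ∣ m := by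
      have h1 : f ∣ m * p ^ α := hmeq ▸ (hfd.trans hdvd)
      exact (Nat.Coprime.pow_right α hcopf.symm).dvd_of_dvd_mul_right h1
    have hiα : i ≤ α := (Nat.factorization_le_iff_dvd hd0 hn0).mpr hdvd p
    have hf0 : 0 < f := Nat.ordCompl_pos p hd0
    by_cases hffull : f = m
    · -- case f = m : d = m * p^i with i < α
      have hi : i < α := by
        rcases lt_or_eq_of_le hiα with h | h
        · exact h
        · exfalso
          have hdn : d = n := by rw [← hdf, hffull, h, mul_comm, hmeq]
          rw [hdn] at hdlt
          exact lt_irrefl n hdlt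
      set S := m.divisors.filter (fun e => m < e * p) with hSdef
      have hmS : m ∈ S := by
        rw [hSdef, Finset.mem_filter, Nat.mem_divisors]
        exact ⟨⟨dvd_refl m, hm0.ne'⟩, (Nat.lt_mul_iff_one_lt_right hm0).mpr hpp.one_lt⟩
      have hSne : S.Nonempty := ⟨m, hmS⟩
      set e' := S.min' hSne with he'def
      have he'S : e' ∈ S := Finset.min'_mem _ _
      have he'm : e' ∣ m := (Nat.mem_divisors.mp (Finset.mem_of_mem_filter _ he'S)).1
      have hlt' : m < e' * p := (Finset.mem_filter.mp he'S).2
      have hminS : ∀ x ∈ S, e' ≤ x := fun x hx => Finset.min'_le _ _ hx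
      have he'0 : 0 < e' := Nat.pos_of_dvd_of_pos he'm hm0
      refine ⟨e' * p ^ (i + 1), ?_, ?_, ?_⟩
      · rw [← hmeq]
        exact mul_dvd_mul he'm (pow_dvd_pow p hi)
      · calc d = m * p ^ i := by rw [← hdf, hffull, mul_comm]
          _ < (e' * p) * p ^ i := by
              exact (Nat.mul_lt_mul_right (pow_pos hpp.pos i)).mpr hlt'
          _ = e' * p ^ (i + 1) := by ring
      · have hdcast : d = m * p ^ i := by rw [← hdf, hffull, mul_comm]
        by_cases he'1 : e' = 1
        · -- e = p^(i+1), use p ≤ θ m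
          rw [he'1]
          have h1 : ((p ^ i : ℕ) : ℝ≥0∞) * θ m ≤ θ (p ^ i * m) :=
            hmul (p ^ i) m (Nat.one_le_iff_ne_zero.mpr (pow_pos hpp.pos i).ne')
              hm0 (Nat.Coprime.pow_left i hcop)
          calc ((1 * p ^ (i + 1) : ℕ) : ℝ≥0∞)
              = ((p ^ i : ℕ) : ℝ≥0∞) * (p : ℝ≥0∞) := by push_cast; ring
            _ ≤ ((p ^ i : ℕ) : ℝ≥0∞) * θ m := mul_le_mul_right hpθ _
            _ ≤ θ (p ^ i * m) := h1
            _ = θ d := by rw [hdcast, mul_comm]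
        · have he'2 : 2 ≤ e' := by omega
          set T := m.divisors.filter (fun x => x < e') with hTdef
          have h1T : (1 : ℕ) ∈ T := by
            rw [hTdef, Finset.mem_filter, Nat.mem_divisors]
            exact ⟨⟨one_dvd m, hm0.ne'⟩, by omega⟩
          have hTne : T.Nonempty := ⟨1, h1T⟩
          set fm := T.max' hTne with hfmdef
          have hfmT : fm ∈ T := Finset.max'_mem _ _
          have hfmm : fm ∣ m := (Nat.mem_divisors.mp (Finset.mem_of_mem_filter _ hfmT)).1
          have hfme' : fm < e' := (Finset.mem_filter.mp hfmT).2
          have hmaxT : ∀ x ∈ T, x ≤ fm := fun x hx => Finset.le_max' _ x hx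
          have hfm0 : 0 < fm := Nat.pos_of_dvd_of_pos hfmm hm0
          have hfmp : fm * p ≤ m := by
            by_contra hc
            push_neg at hc
            have : fm ∈ S := by
              rw [hSdef, Finset.mem_filter, Nat.mem_divisors]
              exact ⟨⟨hfmm, hm0.ne'⟩, hc⟩
            exact absurd (hminS fm this) (not_le.mpr hfme')
          have hfmlt : fm < m := lt_of_lt_of_le hfme' (Nat.le_of_dvd hm0 he'm)
          obtain ⟨g, hgm, hfg, hgθ⟩ := hDm.2 fm hfmm hfmlt
          have he'g : e' ≤ g := by
            by_contra hc
            push_neg at hc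
            have : g ∈ T := by
              rw [hTdef, Finset.mem_filter, Nat.mem_divisors]
              exact ⟨⟨hgm, hm0.ne'⟩, hc⟩
            exact absurd (hmaxT g this) (not_le.mpr hfg)
          have hcopfm : Nat.Coprime (p ^ (i + 1)) fm :=
            Nat.Coprime.pow_left (i + 1) (hcop.coprime_dvd_right hfmm)
          have h1 : ((p ^ (i + 1) : ℕ) : ℝ≥0∞) * θ fm ≤ θ (p ^ (i + 1) * fm) :=
            hmul (p ^ (i + 1)) fm
              (Nat.one_le_iff_ne_zero.mpr (pow_pos hpp.pos (i + 1)).ne') hfm0 hcopfm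
          have h2 : p ^ (i + 1) * fm ≤ m * p ^ i := by
            calc p ^ (i + 1) * fm = (fm * p) * p ^ i := by ring
              _ ≤ m * p ^ i := Nat.mul_le_mul_right _ hfmp
          have h3 : θ (p ^ (i + 1) * fm) ≤ θ d := by
            rw [hdcast]
            exact thetaMono _ _ (Nat.one_le_iff_ne_zero.mpr
              (Nat.mul_ne_zero (pow_pos hpp.pos _).ne' hfm0.ne')) h2
          calc ((e' * p ^ (i + 1) : ℕ) : ℝ≥0∞)
              = ((p ^ (i + 1) : ℕ) : ℝ≥0∞) * (e' : ℝ≥0∞) := by push_cast; ring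
            _ ≤ ((p ^ (i + 1) : ℕ) : ℝ≥0∞) * (g : ℝ≥0∞) := by
                exact mul_le_mul_right (Nat.cast_le.mpr he'g) _
            _ ≤ ((p ^ (i + 1) : ℕ) : ℝ≥0∞) * θ fm := mul_le_mul_right hgθ _
            _ ≤ θ (p ^ (i + 1) * fm) := h1
            _ ≤ θ d := h3
    · -- case f < m
      have hflt : f < m := lt_of_le_of_ne (Nat.le_of_dvd hm0 hfm) hffull
      obtain ⟨g, hgm, hfg, hgθ⟩ := hDm.2 f hfm hflt
      have hg0 : 0 < g := Nat.pos_of_dvd_of_pos hgm hm0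
      refine ⟨g * p ^ i, ?_, ?_, ?_⟩
      · rw [← hmeq]
        exact mul_dvd_mul hgm (pow_dvd_pow p hiα)
      · calc d = p ^ i * f := hdf.symm
          _ < p ^ i * g := (Nat.mul_lt_mul_left (pow_pos hpp.pos i)).mpr hfg
          _ = g * p ^ i := mul_comm _ _
      · have h1 : ((p ^ i : ℕ) : ℝ≥0∞) * θ f ≤ θ (p ^ i * f) :=
          hmul (p ^ i) f (Nat.one_le_iff_ne_zero.mpr (pow_pos hpp.pos i).ne') hf0
            (Nat.Coprime.pow_left i hcopf)
        calc ((g * p ^ i : ℕ) : ℝ≥0∞)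
            = ((p ^ i : ℕ) : ℝ≥0∞) * (g : ℝ≥0∞) := by push_cast; ring
          _ ≤ ((p ^ i : ℕ) : ℝ≥0∞) * θ f := mul_le_mul_right hgθ _
          _ ≤ θ (p ^ i * f) := h1
          _ = θ d := by rw [hdf]
  have DtoB : ∀ n, Dmem θ n → Bmem θ n := by
    intro n hD
    refine ⟨hD.1, ?_⟩
    intro p hp
    have hn0 : n ≠ 0 := hD.1.ne'
    have hmlt : pb n p < n := pb_lt n hn0 p hp
    obtain ⟨e, hen, hme, heθ⟩ := hD.2 (pb n p) (pb_dvd n hn0 p) hmlt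
    have he0 : e ≠ 0 := ne_zero_of_dvd_ne_zero hn0 hen
    have hpe : p ≤ e := by
      by_contra hc
      have hall : ∀ q ∈ e.primeFactors, q < p := by
        by_contra hall
        push_neg at hall
        obtain ⟨q, hq, hpq⟩ := hall
        have : q ≤ e := Nat.le_of_dvd (Nat.pos_of_ne_zero he0) (Nat.dvd_of_mem_primeFactors hq)
        omega
      exact absurd (Nat.le_of_dvd (pb_pos n p) (dvd_pb n hn0 p e hen hall))
        (not_le.mpr hme)
    exact le_trans (Nat.cast_le.mpr hpe) heθ
  exact fun n => ⟨BtoD n, DtoB n⟩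
end
end

section
/- Let θ be an arithmetic function with θ(1) ≥ 2 and θ(n) ≥ P⁺(n) for n ≥ 2, and let χ be the characteristic function of the set 𝔅 defined by the condition p_{j+1} ≤ θ(p₁^{α₁}⋯p_j^{α_j}). Then for every real x ≥ 0, ⌊x⌋ = Σ_{n ≤ x} χ(n) · Φ(x/n, θ(n)), where Φ(y, z) = #{1 ≤ m ≤ y : all prime factors of m exceed z} and Φ(y, ∞) = 1 for y ≥ 1. -/
open scoped Classical ENNReal

noncomputable section

-- generic lemmas about ∏ p ∈ S, p ^ m.factorization p for S ⊆ m.primeFactors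
namespace Aux

variable {m : ℕ} {S : Finset ℕ}

def pp (m : ℕ) (S : Finset ℕ) : ℕ := ∏ p ∈ S, p ^ m.factorization p

lemma pp_pos (hS : S ⊆ m.primeFactors) : 0 < pp m S := by
  apply Finset.prod_pos
  intro p hp
  exact pow_pos (Nat.prime_of_mem_primeFactors (hS hp)).pos _

lemma pp_factorization (hS : S ⊆ m.primeFactors) (q : ℕ) :
    (pp m S).factorization q = if q ∈ S then m.factorization q else 0 := by
  rw [pp, Nat.factorization_prod (fun p hp => (pow_pos (Nat.prime_of_mem_primeFactors (hS hp)).pos _).ne')]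
  rw [Finset.sum_apply']
  have : ∀ p ∈ S, (p ^ m.factorization p).factorization q
      = if p = q then m.factorization p else 0 := by
    intro p hp
    rw [Nat.Prime.factorization_pow (Nat.prime_of_mem_primeFactors (hS hp))]
    simp [Finsupp.single_apply]
  rw [Finset.sum_congr rfl this, Finset.sum_ite_eq' S q (fun p => m.factorization p)]

lemma pp_primeFactors (hS : S ⊆ m.primeFactors) : (pp m S).primeFactors = S := by
  ext q
  rw [← Nat.support_factorization, Finsupp.mem_support_iff, pp_factorization hS]
  constructor
  · intro h
    by_contra hq
    simp [hq] at h
  · intro hq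
    simp only [hq, if_true]
    have := hS hq
    rw [← Nat.support_factorization, Finsupp.mem_support_iff] at this
    exact this

lemma pp_dvd (hm : m ≠ 0) (hS : S ⊆ m.primeFactors) : pp m S ∣ m := by
  rw [← Nat.factorization_le_iff_dvd (pp_pos hS).ne' hm]
  intro q
  rw [pp_factorization hS]
  split <;> simp

lemma pp_univ (hm : m ≠ 0) : pp m m.primeFactors = m := by
  rw [pp, Nat.prod_factorization_eq_prod_primeFactors (fun p k => p ^ k) |>.symm]
  exact Nat.factorization_prod_pow_eq_self hm

end Aux

namespace Aux

lemma pp_mul_compl (hm : m ≠ 0) (hS : S ⊆ m.primeFactors) :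
    pp m S * pp m (m.primeFactors \ S) = m := by
  rw [pp, pp, ← Finset.prod_union (Finset.disjoint_sdiff),
    Finset.union_sdiff_of_subset hS, ← pp, pp_univ hm]

lemma div_pp (hm : m ≠ 0) (hS : S ⊆ m.primeFactors) :
    m / pp m S = pp m (m.primeFactors \ S) := by
  rw [Nat.div_eq_iff_eq_mul_left (pp_pos hS) (pp_dvd hm hS)]
  rw [mul_comm]
  exact (pp_mul_compl hm hS).symm

lemma primeFactors_div_pp (hm : m ≠ 0) (hS : S ⊆ m.primeFactors) :
    (m / pp m S).primeFactors = m.primeFactors \ S := by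
  rw [div_pp hm hS, pp_primeFactors (Finset.sdiff_subset)]

/-- downward-closedness of `S` inside the prime factors of `m` -/
def DC (m : ℕ) (S : Finset ℕ) : Prop := ∀ q ∈ m.primeFactors, ∀ p ∈ S, q ≤ p → q ∈ S

lemma dc_pref (hS : S ⊆ m.primeFactors) (hdc : DC m S) {p : ℕ} (hp : p ∈ S) :
    (∏ q ∈ (pp m S).primeFactors.filter (fun q => q < p), q ^ ((pp m S).factorization q))
      = ∏ q ∈ m.primeFactors.filter (fun q => q < p), q ^ m.factorization q := by
  have hfe : (pp m S).primeFactors.filter (fun q => q < p)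
      = m.primeFactors.filter (fun q => q < p) := by
    rw [pp_primeFactors hS]
    ext q
    simp only [Finset.mem_filter]
    exact ⟨fun ⟨h1, h2⟩ => ⟨hS h1, h2⟩, fun ⟨h1, h2⟩ => ⟨hdc q h1 p hp h2.le, h2⟩⟩
  rw [hfe]
  apply Finset.prod_congr rfl
  intro q hq
  rw [pp_factorization hS]
  have : q ∈ S := hdc q (Finset.mem_filter.mp hq).1 p hp (Finset.mem_filter.mp hq).2.le
  simp [this]

variable (θ : ℕ → ℝ≥0∞)

/-- the chain condition at prime `q` of `m` -/
def cond (m q : ℕ) : Prop :=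
  (q : ℝ≥0∞) ≤ θ (∏ r ∈ m.primeFactors.filter (fun r => r < q), r ^ m.factorization r)

def Tset (m : ℕ) : Finset ℕ :=
  m.primeFactors.filter (fun p => ∀ q ∈ m.primeFactors, q ≤ p → cond θ m q)

def gfun (m : ℕ) : ℕ := pp m (Tset θ m)

lemma Tset_subset : Tset θ m ⊆ m.primeFactors := Finset.filter_subset _ _

lemma Tset_dc : DC m (Tset θ m) := by
  intro q hq p hp hqp
  rw [Tset, Finset.mem_filter] at hp ⊢
  exact ⟨hq, fun r hr hrq => hp.2 r hr (hrq.trans hqp)⟩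

lemma cond_of_mem_Tset {p : ℕ} (hp : p ∈ Tset θ m) : cond θ m p :=
  (Finset.mem_filter.mp hp).2 p (Finset.mem_filter.mp hp).1 le_rfl

end Aux

namespace Aux

variable {m : ℕ} (θ : ℕ → ℝ≥0∞)

lemma gfun_Bmem (hm : m ≠ 0) : Bmem θ (gfun θ m) := by
  refine ⟨pp_pos (Tset_subset θ), ?_⟩
  intro p hp
  rw [gfun, pp_primeFactors (Tset_subset θ)] at hp
  rw [gfun, dc_pref (Tset_subset θ) (Tset_dc θ) hp]
  exact cond_of_mem_Tset θ hp

lemma gfun_dvd (hm : m ≠ 0) : gfun θ m ∣ m := pp_dvd hm (Tset_subset θ)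

lemma gfun_tail (hm : m ≠ 0) {p : ℕ} (hp : p.Prime) (hpd : p ∣ m / gfun θ m) :
    θ (gfun θ m) < p := by
  have hpm : p ∈ (m / gfun θ m).primeFactors := by
    refine Nat.mem_primeFactors.mpr ⟨hp, hpd, ?_⟩
    exact Nat.div_ne_zero_iff_of_dvd (gfun_dvd θ hm) |>.mpr ⟨hm, (pp_pos (Tset_subset θ)).ne'⟩
  rw [gfun, primeFactors_div_pp hm (Tset_subset θ)] at hpm
  -- the set of "bad" primes is nonempty
  have hne : (m.primeFactors \ Tset θ m).Nonempty := ⟨p, hpm⟩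
  set p₀ := (m.primeFactors \ Tset θ m).min' hne with hp₀def
  have hp₀ : p₀ ∈ m.primeFactors \ Tset θ m := Finset.min'_mem _ hne
  have hp₀m := (Finset.mem_sdiff.mp hp₀).1
  have hp₀T := (Finset.mem_sdiff.mp hp₀).2
  -- (a) every prime of m below p₀ is in T
  have ha : ∀ q ∈ m.primeFactors, q < p₀ → q ∈ Tset θ m := by
    intro q hq hlt
    by_contra hqT
    exact absurd (Finset.min'_le _ q (Finset.mem_sdiff.mpr ⟨hq, hqT⟩)) (not_le.mpr hlt)
  -- (b) T = primes of m below p₀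
  have hb : Tset θ m = m.primeFactors.filter (fun q => q < p₀) := by
    ext q
    simp only [Finset.mem_filter]
    constructor
    · intro hq
      refine ⟨Tset_subset θ hq, ?_⟩
      by_contra hge
      exact hp₀T (Tset_dc θ p₀ hp₀m q hq (not_lt.mp hge))
    · exact fun ⟨h1, h2⟩ => ha q h1 h2
  -- (c) the condition fails at p₀, and gfun = pref m p₀
  have hc : ¬ cond θ m p₀ := by
    intro hcond
    apply hp₀T
    rw [Tset, Finset.mem_filter]
    refine ⟨hp₀m, fun q hq hle => ?_⟩
    rcases lt_or_eq_of_le hle with h | h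
    · exact cond_of_mem_Tset θ (ha q hq h)
    · exact h ▸ hcond
  have hgf : gfun θ m = ∏ r ∈ m.primeFactors.filter (fun r => r < p₀), r ^ m.factorization r := by
    rw [gfun, pp, hb]
  rw [cond, not_le] at hc
  rw [hgf]
  calc θ _ < (p₀ : ℝ≥0∞) := hc
    _ ≤ (p : ℝ≥0∞) := by
        exact_mod_cast Finset.min'_le _ p hpm

lemma gfun_eq (hθ : ThetaOK θ) (hm : m ≠ 0) {n : ℕ} (hn : Bmem θ n) (hnd : n ∣ m)
    (htail : ∀ p : ℕ, p.Prime → p ∣ m / n → θ n < p) : gfun θ m = n := by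
  have hn0 : n ≠ 0 := hn.1.ne'
  have hr0 : m / n ≠ 0 := Nat.div_ne_zero_iff_of_dvd hnd |>.mpr ⟨hm, hn0⟩
  have hmul : n * (m / n) = m := Nat.mul_div_cancel' hnd
  -- primes of n are ≤ θ n
  have hle : ∀ p ∈ n.primeFactors, (p : ℝ≥0∞) ≤ θ n := by
    intro p hp
    rcases Nat.lt_or_ge n 2 with h2 | h2
    · interval_cases n <;> simp_all
    · refine le_trans ?_ (hθ.2 n h2)
      exact_mod_cast Finset.le_sup (f := id) hp
  -- primes of m/n exceed θ n
  have hgt : ∀ p ∈ (m / n).primeFactors, θ n < (p : ℝ≥0∞) := fun p hp =>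
    htail p (Nat.prime_of_mem_primeFactors hp) (Nat.dvd_of_mem_primeFactors hp)
  have hunion : m.primeFactors = n.primeFactors ∪ (m / n).primeFactors := by
    conv_lhs => rw [← hmul, Nat.primeFactors_mul hn0 hr0]
  have hdisj : ∀ q, q ∈ n.primeFactors → q ∈ (m / n).primeFactors → False := by
    intro q h1 h2
    exact absurd (hle q h1) (not_le.mpr (hgt q h2))
  -- factorizations agree on primes of n
  have hfac : ∀ q ∈ n.primeFactors, n.factorization q = m.factorization q := by
    intro q hq
    have : m.factorization = n.factorization + (m / n).factorization := by
      conv_lhs => rw [← hmul, Nat.factorization_mul hn0 hr0]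
    rw [this]
    have : (m / n).factorization q = 0 := by
      rw [← Nat.support_factorization] at hdisj
      by_contra h
      exact hdisj q hq (Finsupp.mem_support_iff.mpr h)
    simp [this]
  have hsub : n.primeFactors ⊆ m.primeFactors := by
    rw [hunion]; exact Finset.subset_union_left
  -- n = pp m (n.primeFactors)
  have hppn : pp m n.primeFactors = n := by
    rw [pp, ← Finset.prod_congr rfl (fun q hq => by rw [← hfac q hq]),
      ← Nat.prod_factorization_eq_prod_primeFactors (fun p k => p ^ k),
      Nat.factorization_prod_pow_eq_self hn0]
  -- prefixes within m agree with prefixes within n, for primes of n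
  have hpref : ∀ q ∈ n.primeFactors,
      (∏ r ∈ m.primeFactors.filter (fun r => r < q), r ^ m.factorization r)
        = ∏ r ∈ n.primeFactors.filter (fun r => r < q), r ^ n.factorization r := by
    intro q hq
    have hset : m.primeFactors.filter (fun r => r < q)
        = n.primeFactors.filter (fun r => r < q) := by
      ext s
      simp only [Finset.mem_filter]
      constructor
      · rintro ⟨h1, h2⟩
        refine ⟨?_, h2⟩
        rw [hunion, Finset.mem_union] at h1
        rcases h1 with h1 | h1
        · exact h1
        · exfalso
          have : (q : ℝ≥0∞) < s := lt_of_le_of_lt (hle q hq) (hgt s h1)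
          have : q < s := by exact_mod_cast this
          omega
      · rintro ⟨h1, h2⟩
        exact ⟨hsub h1, h2⟩
    rw [hset]
    exact Finset.prod_congr rfl (fun r hr => by
      rw [hfac r (Finset.mem_filter.mp hr).1])
  -- n.primeFactors ⊆ Tset
  have hTsup : n.primeFactors ⊆ Tset θ m := by
    intro p hp
    rw [Tset, Finset.mem_filter]
    refine ⟨hsub hp, fun q hq hqp => ?_⟩
    have hqn : q ∈ n.primeFactors := by
      rw [hunion, Finset.mem_union] at hq
      rcases hq with h | h
      · exact h
      · exfalso
        have : (p : ℝ≥0∞) < q := lt_of_le_of_lt (hle p hp) (hgt q h)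
        have : p < q := by exact_mod_cast this
        omega
    rw [cond, hpref q hqn]
    exact hn.2 q hqn
  -- Tset ⊆ n.primeFactors
  have hTsub : Tset θ m ⊆ n.primeFactors := by
    by_contra hcon
    rw [Finset.not_subset] at hcon
    have hne : (Tset θ m \ n.primeFactors).Nonempty := by
      obtain ⟨p, h1, h2⟩ := hcon
      exact ⟨p, Finset.mem_sdiff.mpr ⟨h1, h2⟩⟩
    set p₀ := (Tset θ m \ n.primeFactors).min' hne with hp₀def
    have hp₀ := Finset.min'_mem _ hne
    have hp₀T := (Finset.mem_sdiff.mp hp₀).1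
    have hp₀n := (Finset.mem_sdiff.mp hp₀).2
    have hp₀r : p₀ ∈ (m / n).primeFactors := by
      have := Tset_subset θ hp₀T
      rw [hunion, Finset.mem_union] at this
      tauto
    have hset : m.primeFactors.filter (fun r => r < p₀) = n.primeFactors := by
      ext s
      simp only [Finset.mem_filter]
      constructor
      · rintro ⟨h1, h2⟩
        have hsT : s ∈ Tset θ m := Tset_dc θ s h1 p₀ hp₀T h2.le
        by_contra hsn
        exact absurd (Finset.min'_le _ s (Finset.mem_sdiff.mpr ⟨hsT, hsn⟩))
          (not_le.mpr h2)
      · intro h1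
        refine ⟨hsub h1, ?_⟩
        have : (s : ℝ≥0∞) < p₀ := lt_of_le_of_lt (hle s h1) (hgt p₀ hp₀r)
        exact_mod_cast this
    have hcond := cond_of_mem_Tset θ hp₀T
    rw [cond, hset] at hcond
    rw [show (∏ r ∈ n.primeFactors, r ^ m.factorization r) = n by
      rw [← pp, hppn]] at hcond
    exact absurd hcond (not_le.mpr (hgt p₀ hp₀r))
  have : Tset θ m = n.primeFactors := Finset.Subset.antisymm hTsub hTsup
  rw [gfun, this, hppn]

end Aux

/-- `Φ(x, y)`: number of `1 ≤ m ≤ x` all of whose prime factors exceed `y`.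
(When `y = ∞` only `m = 1` qualifies, so `Φ(x, ∞) = 1` for `x ≥ 1`.) -/
noncomputable def Phi (x : ℝ) (y : ℝ≥0∞) : ℕ :=
  ((Finset.Icc 1 ⌊x⌋₊).filter (fun m => ∀ p : ℕ, p.Prime → p ∣ m → y < (p : ℝ≥0∞))).card

theorem stmt3 (θ : ℕ → ℝ≥0∞) (hθ : ThetaOK θ) (x : ℝ) (hx : 0 ≤ x) :
    ⌊x⌋₊ = ∑ n ∈ (Finset.Icc 1 ⌊x⌋₊).filter (fun n => Bmem θ n), Phi (x / n) (θ n) := by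
  classical
  have hcard : (Finset.Icc 1 ⌊x⌋₊).card = ⌊x⌋₊ := by simp [Nat.card_Icc]
  conv_lhs => rw [← hcard]
  rw [Finset.card_eq_sum_card_fiberwise (f := fun m => Aux.gfun θ m)
    (t := (Finset.Icc 1 ⌊x⌋₊).filter (fun n => Bmem θ n)) ?_]
  · apply Finset.sum_congr rfl
    intro n hn
    rw [Finset.mem_filter, Finset.mem_Icc] at hn
    obtain ⟨⟨hn1, hnN⟩, hnB⟩ := hn
    have hn0 : n ≠ 0 := by omega
    have hnR : (0:ℝ) < n := by exact_mod_cast hn1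
    rw [Phi]
    apply Finset.card_nbij' (i := fun m => m / n) (j := fun r => n * r)
    · -- forward
      intro m hm
      rw [Finset.mem_coe, Finset.mem_filter, Finset.mem_Icc] at hm
      obtain ⟨⟨hm1, hmN⟩, hgf⟩ := hm
      have hm0 : m ≠ 0 := by omega
      have hdvd : n ∣ m := hgf ▸ Aux.gfun_dvd θ hm0
      rw [Finset.mem_coe, Finset.mem_filter, Finset.mem_Icc]
      refine ⟨⟨Nat.one_le_div_iff hn1 |>.mpr (Nat.le_of_dvd (by omega) hdvd), ?_⟩, ?_⟩
      · rw [Nat.le_floor_iff (by positivity)]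
        rw [Nat.cast_div hdvd (by exact_mod_cast hn0)]
        have hmx : (m:ℝ) ≤ x := (Nat.le_floor_iff hx).mp hmN
        gcongr
      · intro p pp pd
        have := Aux.gfun_tail θ hm0 pp (by rwa [hgf])
        rwa [hgf] at this
    · -- backward
      intro r hr
      rw [Finset.mem_coe, Finset.mem_filter, Finset.mem_Icc] at hr
      obtain ⟨⟨hr1, hrN⟩, hrp⟩ := hr
      have hr0 : r ≠ 0 := by omega
      have hmul0 : n * r ≠ 0 := Nat.mul_ne_zero hn0 hr0
      rw [Finset.mem_coe, Finset.mem_filter, Finset.mem_Icc]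
      refine ⟨⟨Nat.one_le_iff_ne_zero.mpr hmul0, ?_⟩, ?_⟩
      · rw [Nat.le_floor_iff hx, Nat.cast_mul]
        have hrx : (r:ℝ) ≤ x / n := (Nat.le_floor_iff (by positivity)).mp hrN
        calc (n:ℝ) * r ≤ n * (x / n) := by gcongr
          _ = x := by field_simp
      · apply Aux.gfun_eq θ hθ hmul0 hnB (dvd_mul_right n r)
        intro p pp pd
        rw [Nat.mul_div_cancel_left r (by omega)] at pd
        exact hrp p pp pd
    · -- left inverse
      intro m hm
      rw [Finset.mem_coe, Finset.mem_filter, Finset.mem_Icc] at hm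
      obtain ⟨⟨hm1, hmN⟩, hgf⟩ := hm
      exact Nat.mul_div_cancel' (hgf ▸ Aux.gfun_dvd θ (by omega))
    · -- right inverse
      intro r hr
      exact Nat.mul_div_cancel_left r (by omega)
  · -- fiber map lands in the index set
    intro m hm
    rw [Finset.mem_coe, Finset.mem_Icc] at hm
    have hm0 : m ≠ 0 := by omega
    rw [Finset.mem_coe, Finset.mem_filter, Finset.mem_Icc]
    exact ⟨⟨(Aux.gfun_Bmem θ hm0).1,
      le_trans (Nat.le_of_dvd (by omega) (Aux.gfun_dvd θ hm0)) hm.2⟩, Aux.gfun_Bmem θ hm0⟩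
end
end

section
/- Every positive integer m factors uniquely as m = n·r where n ∈ 𝔅 and either r = 1 or the least prime factor of r exceeds θ(n). -/
open scoped Classical ENNReal

noncomputable section

namespace Stmt4Aux

/-- The product of `p ^ v_p(m)` over `p ∈ S`. -/
def pref (m : ℕ) (S : Finset ℕ) : ℕ := ∏ p ∈ S, p ^ m.factorization p

lemma pref_factorization {m : ℕ} {S : Finset ℕ} (hS : S ⊆ m.primeFactors) (q : ℕ) :
    (pref m S).factorization q = if q ∈ S then m.factorization q else 0 := by
  have hprime : ∀ p ∈ S, p.Prime := fun p hp => Nat.prime_of_mem_primeFactors (hS hp)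
  rw [pref, Nat.factorization_prod (fun p hp => pow_ne_zero _ (hprime p hp).pos.ne')]
  rw [Finset.sum_apply']
  rw [Finset.sum_congr rfl (fun p hp => by
    rw [Nat.Prime.factorization_pow (hprime p hp), Finsupp.single_apply])]
  exact Finset.sum_ite_eq' S q _

lemma pref_pos (m : ℕ) (S : Finset ℕ) (hS : S ⊆ m.primeFactors) : 0 < pref m S :=
  Finset.prod_pos fun p hp => pow_pos (Nat.prime_of_mem_primeFactors (hS hp)).pos _

lemma pref_univ {m : ℕ} (hm : m ≠ 0) : pref m m.primeFactors = m := by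
  have h := Nat.factorization_prod_pow_eq_self hm
  rw [Finsupp.prod, Nat.support_factorization] at h
  rw [pref]
  exact h

lemma pref_dvd {m : ℕ} (hm : m ≠ 0) {S : Finset ℕ} (hS : S ⊆ m.primeFactors) :
    pref m S ∣ m := by
  have h : pref m S ∣ pref m m.primeFactors :=
    Finset.prod_dvd_prod_of_subset S m.primeFactors _ hS
  rwa [pref_univ hm] at h

lemma pref_primeFactors {m : ℕ} {S : Finset ℕ} (hS : S ⊆ m.primeFactors) :
    (pref m S).primeFactors = S := by
  ext q
  rw [← Nat.support_factorization, Finsupp.mem_support_iff, pref_factorization hS]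
  constructor
  · intro h
    by_contra hq
    simp [hq] at h
  · intro hq
    have : m.factorization q ≠ 0 := by
      rw [← Finsupp.mem_support_iff, Nat.support_factorization]; exact hS hq
    simpa [hq] using this

/-- A solution to the factorization problem. -/
def Sol (θ : ℕ → ℝ≥0∞) (m n r : ℕ) : Prop :=
  n * r = m ∧ Bmem θ n ∧ (r = 1 ∨ ∀ p : ℕ, p.Prime → p ∣ r → θ n < (p : ℝ≥0∞))

variable {θ : ℕ → ℝ≥0∞} {m n r : ℕ}

lemma le_theta (hθ : ThetaOK θ) {p : ℕ} (hp : p ∈ n.primeFactors) :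
    (p : ℝ≥0∞) ≤ θ n := by
  obtain ⟨hpp, hpd, hn0⟩ := Nat.mem_primeFactors.mp hp
  have hn1 : n ≠ 1 := by rintro rfl; simp at hp
  have h2 : 2 ≤ n := by omega
  refine le_trans ?_ (hθ.2 n h2)
  exact_mod_cast Nat.cast_le.mpr (Finset.le_sup (f := id) hp)

lemma sol_not_dvd_r (hθ : ThetaOK θ) (hs : Sol θ m n r) {p : ℕ}
    (hp : p ∈ n.primeFactors) : ¬ p ∣ r := by
  intro hpr
  obtain ⟨h1, h2, h3⟩ := hs
  have hpp := Nat.prime_of_mem_primeFactors hp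
  have hr1 : r ≠ 1 := by rintro rfl; exact hpp.ne_one (Nat.eq_one_of_dvd_one hpr)
  have := h3.resolve_left hr1 p hpp hpr
  exact absurd (le_theta hθ hp) (not_le.mpr this)

lemma sol_down (hθ : ThetaOK θ) (hm : m ≠ 0) (hs : Sol θ m n r) {q p : ℕ}
    (hq : q.Prime) (hqm : q ∣ m) (hp : p ∈ n.primeFactors) (hqp : q ≤ p) :
    q ∈ n.primeFactors := by
  obtain ⟨h1, h2, h3⟩ := hs
  by_contra hqn
  have hn0 : n ≠ 0 := h2.1.ne'
  have hqn' : ¬ q ∣ n := fun h => hqn (Nat.mem_primeFactors.mpr ⟨hq, h, hn0⟩)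
  have hqr : q ∣ r := by
    rcases (Nat.Prime.dvd_mul hq).mp (h1 ▸ hqm) with h | h
    · exact absurd h hqn'
    · exact h
  have hr1 : r ≠ 1 := by rintro rfl; exact hq.ne_one (Nat.eq_one_of_dvd_one hqr)
  have hlt := h3.resolve_left hr1 q hq hqr
  have hle : (q : ℝ≥0∞) ≤ θ n :=
    le_trans (by exact_mod_cast Nat.cast_le.mpr hqp) (le_theta hθ hp)
  exact absurd hle (not_le.mpr hlt)

lemma sol_fact_eq (hθ : ThetaOK θ) (hm : m ≠ 0) (hs : Sol θ m n r) {p : ℕ}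
    (hp : p ∈ n.primeFactors) : n.factorization p = m.factorization p := by
  have hn0 : n ≠ 0 := hs.2.1.1.ne'
  have hr0 : r ≠ 0 := fun h => hm (by rw [← hs.1, h, mul_zero])
  have hmm : m.factorization p = n.factorization p + r.factorization p := by
    rw [← hs.1, Nat.factorization_mul hn0 hr0]
    simp
  have hpr : r.factorization p = 0 :=
    Nat.factorization_eq_zero_of_not_dvd (sol_not_dvd_r hθ hs hp)
  omega

lemma sol_pf_subset (hm : m ≠ 0) (hs : Sol θ m n r) : n.primeFactors ⊆ m.primeFactors :=
  Nat.primeFactors_mono (Dvd.intro r hs.1) hm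

lemma sol_n_eq (hθ : ThetaOK θ) (hm : m ≠ 0) (hs : Sol θ m n r) :
    n = pref m n.primeFactors := by
  have hn0 : n ≠ 0 := hs.2.1.1.ne'
  conv_lhs => rw [← Nat.factorization_prod_pow_eq_self hn0]
  rw [Nat.prod_factorization_eq_prod_primeFactors, pref]
  exact Finset.prod_congr rfl fun p hp => by rw [sol_fact_eq hθ hm hs hp]

lemma sol_no_cross (hθ : ThetaOK θ) (hm : m ≠ 0) (hs : Sol θ m n r)
    {n' r' : ℕ} (hs' : Sol θ m n' r') {p : ℕ} (hp' : p ∈ n'.primeFactors)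
    (hpn : p ∉ n.primeFactors)
    (hfil : n.primeFactors = n'.primeFactors.filter (fun q => q < p)) : False := by
  have hpp := Nat.prime_of_mem_primeFactors hp'
  have hn0 : n ≠ 0 := hs.2.1.1.ne'
  have hB' := hs'.2.1.2 p hp'
  have hprod : (∏ q ∈ n'.primeFactors.filter (fun q => q < p), q ^ n'.factorization q) = n := by
    rw [← hfil]
    conv_rhs => rw [sol_n_eq hθ hm hs]
    refine Finset.prod_congr rfl fun q hq => ?_
    have hq' : q ∈ n'.primeFactors := Finset.filter_subset _ _ (hfil ▸ hq)
    rw [sol_fact_eq hθ hm hs' hq']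
  rw [hprod] at hB'
  -- p divides r
  have hpm : p ∣ m := dvd_trans (Nat.dvd_of_mem_primeFactors hp') (Dvd.intro r' hs'.1)
  have hpn' : ¬ p ∣ n := fun h => hpn (Nat.mem_primeFactors.mpr ⟨hpp, h, hn0⟩)
  have hpr : p ∣ r := by
    rcases (Nat.Prime.dvd_mul hpp).mp (hs.1 ▸ hpm) with h | h
    · exact absurd h hpn'
    · exact h
  have hr1 : r ≠ 1 := by rintro rfl; exact hpp.ne_one (Nat.eq_one_of_dvd_one hpr)
  have hlt := hs.2.2.resolve_left hr1 p hpp hpr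
  exact absurd hB' (not_le.mpr hlt)

lemma sol_unique (hθ : ThetaOK θ) (hm : m ≠ 0) (hs : Sol θ m n r)
    {n' r' : ℕ} (hs' : Sol θ m n' r') : n = n' ∧ r = r' := by
  have hSS : n.primeFactors = n'.primeFactors := by
    by_contra hne
    set S := n.primeFactors with hSdef
    set S' := n'.primeFactors with hS'def
    have hD : ((S \ S') ∪ (S' \ S)).Nonempty := by
      by_contra h
      rw [Finset.not_nonempty_iff_eq_empty, Finset.union_eq_empty,
        Finset.sdiff_eq_empty_iff_subset, Finset.sdiff_eq_empty_iff_subset] at h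
      exact hne (Finset.Subset.antisymm h.1 h.2)
    set p := ((S \ S') ∪ (S' \ S)).min' hD with hpdef
    have hpmem := Finset.min'_mem _ hD
    have hkey : ∀ q, q < p → (q ∈ S ↔ q ∈ S') := by
      intro q hq
      by_contra hiff
      have hqD : q ∈ (S \ S') ∪ (S' \ S) := by
        simp only [Finset.mem_union, Finset.mem_sdiff]
        tauto
      exact absurd (Finset.min'_le _ q hqD) (not_le.mpr hq)
    rcases Finset.mem_union.mp hpmem with hpc | hpc
    · -- p ∈ S \ S' : swap roles
      obtain ⟨hpS, hpnS'⟩ := Finset.mem_sdiff.mp hpc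
      refine sol_no_cross hθ hm hs' hs hpS hpnS' ?_
      have hpp := Nat.prime_of_mem_primeFactors hpS
      have hpm : p ∣ m := dvd_trans (Nat.dvd_of_mem_primeFactors hpS) (Dvd.intro r hs.1)
      ext q
      simp only [Finset.mem_filter]
      constructor
      · intro hq
        have hqlt : q < p := by
          rcases lt_trichotomy q p with h | h | h
          · exact h
          · subst h; exact absurd hq hpnS'
          · exact absurd (sol_down hθ hm hs' hpp hpm hq h.le) hpnS'
        exact ⟨(hkey q hqlt).mpr hq, hqlt⟩
      · rintro ⟨hq, hqlt⟩
        exact (hkey q hqlt).mp hq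
    · obtain ⟨hpS', hpnS⟩ := Finset.mem_sdiff.mp hpc
      refine sol_no_cross hθ hm hs hs' hpS' hpnS ?_
      have hpp := Nat.prime_of_mem_primeFactors hpS'
      have hpm : p ∣ m := dvd_trans (Nat.dvd_of_mem_primeFactors hpS') (Dvd.intro r' hs'.1)
      ext q
      simp only [Finset.mem_filter]
      constructor
      · intro hq
        have hqlt : q < p := by
          rcases lt_trichotomy q p with h | h | h
          · exact h
          · subst h; exact absurd hq hpnS
          · exact absurd (sol_down hθ hm hs hpp hpm hq h.le) hpnS
        exact ⟨(hkey q hqlt).mp hq, hqlt⟩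
      · rintro ⟨hq, hqlt⟩
        exact (hkey q hqlt).mpr hq
  have hnn : n = n' := by
    rw [sol_n_eq hθ hm hs, sol_n_eq hθ hm hs', hSS]
  refine ⟨hnn, ?_⟩
  have : n * r = n * r' := by rw [hs.1, hnn, hs'.1]
  exact Nat.eq_of_mul_eq_mul_left hs.2.1.1 this

/-- Existence of a solution. -/
lemma sol_exists (hθ : ThetaOK θ) (hm : 1 ≤ m) : ∃ n r, Sol θ m n r := by
  have hm0 : m ≠ 0 := by omega
  set P := m.primeFactors with hP
  set Bad := P.filter (fun q : ℕ => ¬ ((q : ℝ≥0∞) ≤ θ (pref m (P.filter (fun q' => q' < q))))) with hBad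
  rcases eq_or_ne Bad ∅ with hB | hB
  · -- everything good: take n = m, r = 1
    refine ⟨m, 1, mul_one m, ⟨by omega, fun p hp => ?_⟩, Or.inl rfl⟩
    have hgood : (p : ℝ≥0∞) ≤ θ (pref m (P.filter (fun q' => q' < p))) := by
      by_contra hng
      have : p ∈ Bad := Finset.mem_filter.mpr ⟨hp, hng⟩
      rw [hB] at this
      exact absurd this (Finset.notMem_empty p)
    exact hgood
  · have hBne : Bad.Nonempty := Finset.nonempty_of_ne_empty hB
    set q0 := Bad.min' hBne with hq0
    have hq0Bad : q0 ∈ Bad := Finset.min'_mem _ hBne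
    obtain ⟨hq0P, hq0ng⟩ := Finset.mem_filter.mp hq0Bad
    set S := P.filter (fun q => q < q0) with hS
    have hSsub : S ⊆ P := Finset.filter_subset _ _
    set n := pref m S with hn
    have hn0 : 0 < n := pref_pos m S hSsub
    have hdvd : n ∣ m := pref_dvd hm0 hSsub
    have hmul : n * (m / n) = m := Nat.mul_div_cancel' hdvd
    have hnPF : n.primeFactors = S := pref_primeFactors hSsub
    have hnfact : ∀ q ∈ S, n.factorization q = m.factorization q := fun q hq => by
      rw [pref_factorization hSsub, if_pos hq]
    have hr0 : m / n ≠ 0 := fun h => hm0 (by rw [← hmul, h, mul_zero])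
    refine ⟨n, m / n, hmul, ⟨hn0, fun p hp => ?_⟩, Or.inr fun p hpp hpr => ?_⟩
    · -- Bmem condition
      rw [hnPF] at hp
      obtain ⟨hpP, hplt⟩ := Finset.mem_filter.mp hp
      have hgood : (p : ℝ≥0∞) ≤ θ (pref m (P.filter (fun q' => q' < p))) := by
        by_contra hng
        have hpB : p ∈ Bad := Finset.mem_filter.mpr ⟨hpP, hng⟩
        exact absurd (Finset.min'_le _ p hpB) (not_le.mpr hplt)
      have hfe : n.primeFactors.filter (fun q => q < p) = P.filter (fun q' => q' < p) := by
        rw [hnPF, hS, Finset.filter_filter]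
        exact Finset.filter_congr fun q hq => by
          constructor
          · rintro ⟨_, h⟩; exact h
          · intro h; exact ⟨lt_trans h hplt, h⟩
      have hpe : (∏ q ∈ n.primeFactors.filter (fun q => q < p), q ^ n.factorization q)
          = pref m (P.filter (fun q' => q' < p)) := by
        rw [hfe, pref]
        refine Finset.prod_congr rfl fun q hq => ?_
        obtain ⟨hqP, hqlt⟩ := Finset.mem_filter.mp hq
        rw [hnfact q (Finset.mem_filter.mpr ⟨hqP, lt_trans hqlt hplt⟩)]
      rw [hpe]
      exact hgood
    · -- primes of r exceed θ n
      have hpm : p ∣ m := dvd_trans hpr (Nat.div_dvd_of_dvd hdvd)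
      have hpP : p ∈ P := Nat.mem_primeFactors.mpr ⟨hpp, hpm, hm0⟩
      have hpnS : p ∉ S := by
        intro hpS
        have h1 : n.factorization p = m.factorization p := hnfact p hpS
        have h2 : m.factorization p = n.factorization p + (m / n).factorization p := by
          conv_lhs => rw [← hmul]
          rw [Nat.factorization_mul hn0.ne' hr0]
          rfl
        have h3 : (m / n).factorization p = 0 := by omega
        have h4 : 0 < (m / n).factorization p :=
          Nat.Prime.factorization_pos_of_dvd hpp hr0 hpr
        omega
      have hq0p : q0 ≤ p := by
        by_contra h
        exact hpnS (Finset.mem_filter.mpr ⟨hpP, by omega⟩)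
      have hlt : θ n < (q0 : ℝ≥0∞) := by
        rw [hn, hS]
        exact not_le.mp hq0ng
      exact lt_of_lt_of_le hlt (by exact_mod_cast Nat.cast_le.mpr hq0p)

end Stmt4Aux

theorem stmt4 (θ : ℕ → ℝ≥0∞) (hθ : ThetaOK θ) (m : ℕ) (hm : 1 ≤ m) :
    ∃! nr : ℕ × ℕ, nr.1 * nr.2 = m ∧ Bmem θ nr.1 ∧
      (nr.2 = 1 ∨ ∀ p : ℕ, p.Prime → p ∣ nr.2 → θ nr.1 < (p : ℝ≥0∞)) := by
  have hm0 : m ≠ 0 := by omega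
  obtain ⟨n, r, hs⟩ := Stmt4Aux.sol_exists hθ hm
  refine ⟨(n, r), hs, ?_⟩
  rintro ⟨n', r'⟩ hs'
  obtain ⟨h1, h2⟩ := Stmt4Aux.sol_unique hθ hm0 (hs' : Stmt4Aux.Sol θ m n' r') hs
  exact Prod.ext h1 h2
end
end

section
/- Let θ satisfy θ(1) ≥ 2 and θ(n) ≥ P⁺(n) for n ≥ 2, and let χ be the characteristic function of the associated set 𝔅. Then for every N ≥ 1, Σ_{n ≤ N} (χ(n)/n) · Π_{p ≤ θ(n)} (1 − 1/p) ≤ 1; in particular the series L = Σ_{n ≥ 1} (χ(n)/n) Π_{p ≤ θ(n)} (1 − 1/p) converges to a value in [0, 1]. -/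
open scoped Classical ENNReal

noncomputable section

/-- The Euler factor `∏_{p ≤ y} (1 - 1/p)`, interpreted as `0` when `y = ∞`. -/
noncomputable def eulerWeight (y : ℝ≥0∞) : ℝ :=
  if y = ∞ then 0
  else ∏ p ∈ (Finset.range (⌊y.toReal⌋₊ + 1)).filter Nat.Prime, (1 - 1 / (p : ℝ))

/-- The general term of the series `L`. -/
noncomputable def Lterm (θ : ℕ → ℝ≥0∞) (n : ℕ) : ℝ :=
  (if Bmem θ n then (1 : ℝ) / n else 0) * eulerWeight (θ n)

/-- `B(x)`: number of `n ≤ x` belonging to `𝔅`. -/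
noncomputable def Bcount (θ : ℕ → ℝ≥0∞) (x : ℝ) : ℕ :=
  ((Finset.Icc 1 ⌊x⌋₊).filter (fun n => Bmem θ n)).card

namespace Stmt5Aux

/-- The set of primes `≤ y` (as used in `eulerWeight`). -/
def F (y : ℝ≥0∞) : Finset ℕ := (Finset.range (⌊y.toReal⌋₊ + 1)).filter Nat.Prime

/-- The product of the primes `≤ y`. -/
def Pf (y : ℝ≥0∞) : ℕ := ∏ p ∈ F y, p

lemma F_primes {y : ℝ≥0∞} : ∀ p ∈ F y, p.Prime := fun p hp => (Finset.mem_filter.mp hp).2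

lemma Pf_pos (y : ℝ≥0∞) : 0 < Pf y :=
  Finset.prod_pos fun p hp => (F_primes p hp).pos

lemma mem_F_of_le {y : ℝ≥0∞} (hy : y ≠ ∞) {p : ℕ} (hp : p.Prime)
    (h : (p : ℝ≥0∞) ≤ y) : p ∈ F y := by
  refine Finset.mem_filter.mpr ⟨Finset.mem_range.mpr ?_, hp⟩
  have : p ≤ ⌊y.toReal⌋₊ := by
    apply Nat.le_floor
    rw [← ENNReal.toReal_natCast p]; exact ENNReal.toReal_mono hy h
  omega

/-- Prime factors of `m` coprime to `Pf y` all exceed `y`. -/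
lemma lt_of_coprime {y : ℝ≥0∞} (hy : y ≠ ∞) {m : ℕ} (hc : Nat.Coprime (Pf y) m)
    {p : ℕ} (hp : p ∈ m.primeFactors) : y < (p : ℝ≥0∞) := by
  by_contra h
  push_neg at h
  obtain ⟨hpp, hpm, -⟩ := Nat.mem_primeFactors.mp hp
  have h1 : p ∣ Pf y := Finset.dvd_prod_of_mem _ (mem_F_of_le hy hpp h)
  have : p ∣ 1 := hc ▸ Nat.dvd_gcd h1 hpm
  exact hpp.one_lt.ne' (Nat.dvd_one.mp this)

/-- Euler's product formula for the product of primes up to `y`. -/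
lemma totient_Pf (y : ℝ≥0∞) :
    ((Pf y).totient : ℝ) = (Pf y : ℝ) * ∏ p ∈ F y, (1 - 1 / (p : ℝ)) := by
  have h := Nat.totient_eq_mul_prod_factors (Pf y)
  rw [Pf, Nat.primeFactors_prod F_primes] at h
  have h2 := congrArg (fun q : ℚ => (q : ℝ)) h
  push_cast at h2
  rw [Pf]
  push_cast
  rw [h2]
  congr 1
  exact Finset.prod_congr rfl fun p _ => by rw [one_div]

/-- Exact count of integers in `(0, P*c]` coprime to `P`. -/
lemma count_coprime (P : ℕ) (c : ℕ) :
    ((Finset.Ioc 0 (P * c)).filter (fun m => Nat.Coprime P m)).card = c * P.totient := by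
  induction c with
  | zero => simp
  | succ c ih =>
    have hsplit : Finset.Ioc 0 (P * (c + 1)) =
        Finset.Ioc 0 (P * c) ∪ Finset.Ico (P * c + 1) (P * c + 1 + P) := by
      ext m
      simp only [Finset.mem_Ioc, Finset.mem_union, Finset.mem_Ico]
      constructor
      · rintro ⟨h1, h2⟩
        rcases le_or_gt m (P * c) with h | h
        · exact Or.inl ⟨h1, h⟩
        · refine Or.inr ⟨by omega, by nlinarith⟩
      · rintro (⟨h1, h2⟩ | ⟨h1, h2⟩)
        · exact ⟨h1, by nlinarith⟩
        · refine ⟨by omega, by nlinarith⟩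
    have hdisj : Disjoint ((Finset.Ioc 0 (P * c)).filter (fun m => Nat.Coprime P m))
        ((Finset.Ico (P * c + 1) (P * c + 1 + P)).filter (fun m => Nat.Coprime P m)) := by
      apply Finset.disjoint_filter_filter
      rw [Finset.disjoint_left]
      intro a ha hb
      have h1 := (Finset.mem_Ioc.mp ha).2
      have h2 := (Finset.mem_Ico.mp hb).1
      omega
    rw [hsplit, Finset.filter_union, Finset.card_union_of_disjoint hdisj, ih]
    have := Nat.filter_coprime_Ico_eq_totient P (P * c + 1)
    rw [this]
    ring

/-- Representation of `n` as the product of the small prime powers of `n * m`. -/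
lemma rep {y : ℝ≥0∞} {n m : ℕ} (hn : 0 < n) (hm : 0 < m)
    (hnp : ∀ p ∈ n.primeFactors, (p : ℝ≥0∞) ≤ y)
    (hmp : ∀ p ∈ m.primeFactors, y < (p : ℝ≥0∞)) :
    n = ∏ q ∈ (n * m).primeFactors.filter (fun q : ℕ => (q : ℝ≥0∞) ≤ y),
          q ^ ((n * m).factorization q) := by
  have hset : (n * m).primeFactors.filter (fun q : ℕ => (q : ℝ≥0∞) ≤ y) = n.primeFactors := by
    rw [Nat.primeFactors_mul hn.ne' hm.ne']
    ext q
    simp only [Finset.mem_filter, Finset.mem_union]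
    constructor
    · rintro ⟨hq | hq, hle⟩
      · exact hq
      · exact absurd hle (hmp q hq).not_ge
    · intro hq
      exact ⟨Or.inl hq, hnp q hq⟩
  rw [hset]
  have hexp : ∀ q ∈ n.primeFactors, (n * m).factorization q = n.factorization q := by
    intro q hq
    have hqm : q ∉ m.primeFactors := fun h => (hmp q h).not_ge (hnp q hq)
    have hm0 : m.factorization q = 0 := by
      rw [← Finsupp.notMem_support_iff, Nat.support_factorization]; exact hqm
    rw [Nat.factorization_mul hn.ne' hm.ne', Finsupp.add_apply, hm0, add_zero]
  rw [Finset.prod_congr rfl (fun q hq => by rw [hexp q hq])]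
  conv_lhs => rw [← Nat.factorization_prod_pow_eq_self hn.ne']
  rw [Finsupp.prod, Nat.support_factorization]

lemma primes_le {θ : ℕ → ℝ≥0∞} (hθ : ThetaOK θ) {n : ℕ} (hn : 0 < n) :
    ∀ p ∈ n.primeFactors, (p : ℝ≥0∞) ≤ θ n := by
  intro p hp
  rcases eq_or_lt_of_le (show 1 ≤ n from hn) with h | h
  · rw [← h] at hp; simp at hp
  · have h2 : 2 ≤ n := h
    have : p ≤ maxPrimeFac n := Finset.le_sup (f := id) hp
    calc (p : ℝ≥0∞) ≤ (maxPrimeFac n : ℝ≥0∞) := by exact_mod_cast this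
      _ ≤ θ n := hθ.2 n h2

/-- The core lemma: if `θ n1 < θ n2`, the two representations are incompatible. -/
lemma key_aux {θ : ℕ → ℝ≥0∞} (hθ : ThetaOK θ) {n1 m1 n2 m2 : ℕ}
    (h1 : Bmem θ n1) (h2 : Bmem θ n2) (hm1 : 0 < m1) (hm2 : 0 < m2)
    (hc1 : ∀ p ∈ m1.primeFactors, θ n1 < (p : ℝ≥0∞))
    (hc2 : ∀ p ∈ m2.primeFactors, θ n2 < (p : ℝ≥0∞))
    (heq : n1 * m1 = n2 * m2) (hlt : θ n1 < θ n2) : False := by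
  obtain ⟨hn1, hB1⟩ := h1
  obtain ⟨hn2, hB2⟩ := h2
  have hk0 : n1 * m1 ≠ 0 := by positivity
  have rep1 : n1 = ∏ q ∈ (n1 * m1).primeFactors.filter (fun q : ℕ => (q : ℝ≥0∞) ≤ θ n1),
      q ^ ((n1 * m1).factorization q) := rep hn1 hm1 (primes_le hθ hn1) hc1
  have rep2 : n2 = ∏ q ∈ (n1 * m1).primeFactors.filter (fun q : ℕ => (q : ℝ≥0∞) ≤ θ n2),
      q ^ ((n1 * m1).factorization q) := by
    rw [heq]
    exact rep hn2 hm2 (primes_le hθ hn2) hc2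
  set S1 := (n1 * m1).primeFactors.filter (fun q : ℕ => (q : ℝ≥0∞) ≤ θ n1) with hS1
  set S2 := (n1 * m1).primeFactors.filter (fun q : ℕ => (q : ℝ≥0∞) ≤ θ n2) with hS2
  have hsub : S1 ⊆ S2 := by
    intro q hq
    rw [hS1, Finset.mem_filter] at hq
    exact Finset.mem_filter.mpr ⟨hq.1, le_trans hq.2 hlt.le⟩
  have hne : S1 ≠ S2 := by
    intro h
    rw [h, ← rep2] at rep1
    exact hlt.ne (by rw [rep1])
  have hD : (S2 \ S1).Nonempty :=
    Finset.sdiff_nonempty.mpr (fun h => hne (Finset.Subset.antisymm hsub h))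
  set p0 := (S2 \ S1).min' hD with hp0def
  have hp0mem := Finset.min'_mem (S2 \ S1) hD
  rw [Finset.mem_sdiff] at hp0mem
  obtain ⟨hp0S2, hp0nS1⟩ := hp0mem
  obtain ⟨hp0k, hp0le2⟩ := Finset.mem_filter.mp hp0S2
  have hp0gt1 : θ n1 < (p0 : ℝ≥0∞) := by
    by_contra h
    push_neg at h
    exact hp0nS1 (Finset.mem_filter.mpr ⟨hp0k, h⟩)
  -- fact about n2's factorization for small primes of k
  have hfact2 : ∀ q ∈ (n1 * m1).primeFactors, (q : ℝ≥0∞) ≤ θ n2 →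
      q ∈ n2.primeFactors ∧ n2.factorization q = (n1 * m1).factorization q := by
    intro q hq hle
    have hqm2 : q ∉ m2.primeFactors := fun h => (hc2 q h).not_ge hle
    have hm20 : m2.factorization q = 0 := by
      rw [← Finsupp.notMem_support_iff, Nat.support_factorization]; exact hqm2
    have hkfac : (n1 * m1).factorization q = n2.factorization q := by
      rw [heq, Nat.factorization_mul hn2.ne' hm2.ne', Finsupp.add_apply, hm20, add_zero]
    have hkq : (n1 * m1).factorization q ≠ 0 := by
      rw [← Finsupp.mem_support_iff, Nat.support_factorization]; exact hq
    refine ⟨?_, hkfac.symm⟩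
    rw [← Nat.support_factorization, Finsupp.mem_support_iff]
    rw [hkfac] at hkq; exact hkq
  have hp0n2 : p0 ∈ n2.primeFactors := (hfact2 p0 hp0k hp0le2).1
  have hBound := hB2 p0 hp0n2
  -- the prefix of n2 below p0 equals n1
  have hsetEq : n2.primeFactors.filter (fun q => q < p0) = S1 := by
    ext q
    simp only [Finset.mem_filter, hS1]
    constructor
    · rintro ⟨hqn2, hqlt⟩
      have hqk : q ∈ (n1 * m1).primeFactors := by
        apply Nat.primeFactors_mono (⟨m2, heq⟩ : n2 ∣ n1 * m1) hk0
        exact hqn2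
      refine ⟨hqk, ?_⟩
      by_contra h
      push_neg at h
      have hqle2 : (q : ℝ≥0∞) ≤ θ n2 := primes_le hθ hn2 q hqn2
      have hqD : q ∈ S2 \ S1 := by
        rw [Finset.mem_sdiff, hS2, hS1]
        refine ⟨Finset.mem_filter.mpr ⟨hqk, hqle2⟩, ?_⟩
        intro hc
        exact h.not_ge (Finset.mem_filter.mp hc).2
      have := Finset.min'_le _ q hqD
      omega
    · rintro ⟨hqk, hqle⟩
      have hqle2 : (q : ℝ≥0∞) ≤ θ n2 := le_trans hqle hlt.le
      refine ⟨(hfact2 q hqk hqle2).1, ?_⟩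
      have : (q : ℝ≥0∞) < (p0 : ℝ≥0∞) := lt_of_le_of_lt hqle hp0gt1
      exact_mod_cast this
  have hprodEq : (∏ q ∈ n2.primeFactors.filter (fun q => q < p0),
      q ^ (n2.factorization q)) = n1 := by
    rw [hsetEq, rep1]
    apply Finset.prod_congr rfl
    intro q hq
    obtain ⟨hqk, hqle⟩ := Finset.mem_filter.mp hq
    rw [(hfact2 q hqk (le_trans hqle hlt.le)).2]
  rw [hprodEq] at hBound
  exact hp0gt1.not_ge hBound

/-- Injectivity of `(n, m) ↦ n * m`. -/
lemma key {θ : ℕ → ℝ≥0∞} (hθ : ThetaOK θ) {n1 m1 n2 m2 : ℕ}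
    (h1 : Bmem θ n1) (h2 : Bmem θ n2) (hm1 : 0 < m1) (hm2 : 0 < m2)
    (hc1 : ∀ p ∈ m1.primeFactors, θ n1 < (p : ℝ≥0∞))
    (hc2 : ∀ p ∈ m2.primeFactors, θ n2 < (p : ℝ≥0∞))
    (heq : n1 * m1 = n2 * m2) : n1 = n2 := by
  rcases lt_trichotomy (θ n1) (θ n2) with hlt | heq2 | hgt
  · exact absurd hlt (fun h => key_aux hθ h1 h2 hm1 hm2 hc1 hc2 heq h)
  · have rep1 : n1 = ∏ q ∈ (n1 * m1).primeFactors.filter (fun q : ℕ => (q : ℝ≥0∞) ≤ θ n1),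
        q ^ ((n1 * m1).factorization q) := rep h1.1 hm1 (primes_le hθ h1.1) hc1
    have rep2 : n2 = ∏ q ∈ (n1 * m1).primeFactors.filter (fun q : ℕ => (q : ℝ≥0∞) ≤ θ n2),
        q ^ ((n1 * m1).factorization q) := by
      rw [heq]
      exact rep h2.1 hm2 (primes_le hθ h2.1) hc2
    rw [rep1, rep2, heq2]
  · exact (key_aux hθ h2 h1 hm2 hm1 hc2 hc1 heq.symm hgt).elim

lemma eulerWeight_nonneg (y : ℝ≥0∞) : 0 ≤ eulerWeight y := by
  rw [eulerWeight]
  split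
  · exact le_refl 0
  · exact Finset.prod_nonneg fun p hp => by
      have hp2 : 2 ≤ p := (Finset.mem_filter.mp hp).2.two_le
      have : (1 : ℝ) / p ≤ 1 := by
        rw [div_le_one (by positivity)]
        exact_mod_cast Nat.one_le_iff_ne_zero.mpr (by omega)
      linarith

lemma Lterm_nonneg (θ : ℕ → ℝ≥0∞) (n : ℕ) : 0 ≤ Lterm θ n := by
  rw [Lterm]
  apply mul_nonneg
  · split
    · positivity
    · exact le_refl 0
  · exact eulerWeight_nonneg _

/-- Main bound: partial sums are at most 1. -/
lemma main_bound (θ : ℕ → ℝ≥0∞) (hθ : ThetaOK θ) (N : ℕ) :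
    ∑ n ∈ Finset.Icc 1 N, Lterm θ n ≤ 1 := by
  classical
  set S : Finset ℕ := (Finset.Icc 1 N).filter (fun n => Bmem θ n ∧ θ n ≠ ∞) with hSdef
  have hsum_eq : ∑ n ∈ Finset.Icc 1 N, Lterm θ n
      = ∑ n ∈ S, (1 / (n : ℝ)) * ∏ p ∈ F (θ n), (1 - 1 / (p : ℝ)) := by
    rw [hSdef, Finset.sum_filter]
    apply Finset.sum_congr rfl
    intro n _
    by_cases hB : Bmem θ n
    · by_cases hfin : θ n = ∞
      · simp only [hB, hfin, if_pos, and_true, not_true, if_neg, and_false, if_false,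
          Lterm, eulerWeight, if_pos hfin, mul_zero]
        simp [hfin]
      · rw [if_pos ⟨hB, hfin⟩, Lterm, if_pos hB, eulerWeight, if_neg hfin]
        rfl
    · rw [if_neg (fun h => hB h.1), Lterm, if_neg hB, zero_mul]
  rw [hsum_eq]
  -- setup
  set Pfn : ℕ → ℕ := fun n => Pf (θ n) with hPfn
  set M : ℕ := ∏ n ∈ S, (n * Pfn n) with hM
  have hSpos : ∀ n ∈ S, 0 < n := by
    intro n hn
    have := (Finset.mem_filter.mp hn).1
    exact (Finset.mem_Icc.mp this).1
  have hM0 : 0 < M := by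
    rw [hM]
    apply Finset.prod_pos
    intro n hn
    exact Nat.mul_pos (hSpos n hn) (Pf_pos _)
  set R : ℕ → ℕ := fun n => M / (n * Pfn n) with hR
  have hMeq : ∀ n ∈ S, n * Pfn n * R n = M := by
    intro n hn
    exact Nat.mul_div_cancel' (Finset.dvd_prod_of_mem _ hn)
  set A : ℕ → Finset ℕ := fun n =>
    (Finset.Ioc 0 (Pfn n * R n)).filter (fun m => Nat.Coprime (Pfn n) m) with hA
  have hcardA : ∀ n, (A n).card = R n * (Pfn n).totient := fun n => count_coprime _ _
  set T : ℕ → Finset ℕ := fun n => (A n).image (fun m => n * m) with hT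
  have hcardT : ∀ n ∈ S, (T n).card = R n * (Pfn n).totient := by
    intro n hn
    rw [hT, Finset.card_image_of_injective _ (mul_right_injective₀ (hSpos n hn).ne'),
      hcardA]
  have hTsub : ∀ n ∈ S, T n ⊆ Finset.Ioc 0 M := by
    intro n hn k hk
    obtain ⟨m, hm, rfl⟩ := Finset.mem_image.mp hk
    obtain ⟨hm1, -⟩ := (Finset.mem_filter.mp hm)
    obtain ⟨hm2, hm3⟩ := Finset.mem_Ioc.mp hm1
    rw [Finset.mem_Ioc]
    constructor
    · exact Nat.mul_pos (hSpos n hn) hm2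
    · calc n * m ≤ n * (Pfn n * R n) := Nat.mul_le_mul_left n hm3
        _ = M := by rw [← mul_assoc, hMeq n hn]
  have hkey : ∀ n ∈ S, ∀ m ∈ A n, ∀ p ∈ m.primeFactors, θ n < (p : ℝ≥0∞) := by
    intro n hn m hm p hp
    obtain ⟨-, hB, hfin⟩ := Finset.mem_filter.mp hn
    exact lt_of_coprime hfin (Finset.mem_filter.mp hm).2 hp
  have hdisj : ∀ n1 ∈ S, ∀ n2 ∈ S, n1 ≠ n2 → Disjoint (T n1) (T n2) := by
    intro n1 hn1 n2 hn2 hne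
    rw [Finset.disjoint_left]
    intro k hk1 hk2
    obtain ⟨m1, hm1, hkm1⟩ := Finset.mem_image.mp hk1
    obtain ⟨m2, hm2, hkm2⟩ := Finset.mem_image.mp hk2
    have hm1pos : 0 < m1 := (Finset.mem_Ioc.mp (Finset.mem_filter.mp hm1).1).1
    have hm2pos : 0 < m2 := (Finset.mem_Ioc.mp (Finset.mem_filter.mp hm2).1).1
    have hB1 := (Finset.mem_filter.mp hn1).2.1
    have hB2 := (Finset.mem_filter.mp hn2).2.1
    exact hne (key hθ hB1 hB2 hm1pos hm2pos (hkey n1 hn1 m1 hm1) (hkey n2 hn2 m2 hm2)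
      (hkm1.trans hkm2.symm))
  have hcount : ∑ n ∈ S, R n * (Pfn n).totient ≤ M := by
    calc ∑ n ∈ S, R n * (Pfn n).totient = ∑ n ∈ S, (T n).card :=
          Finset.sum_congr rfl (fun n hn => (hcardT n hn).symm)
      _ = (S.biUnion T).card := (Finset.card_biUnion hdisj).symm
      _ ≤ (Finset.Ioc 0 M).card :=
          Finset.card_le_card (Finset.biUnion_subset.mpr hTsub)
      _ = M := by rw [Nat.card_Ioc]; omega
  -- convert to reals
  have hterm : ∀ n ∈ S, (1 / (n : ℝ)) * ∏ p ∈ F (θ n), (1 - 1 / (p : ℝ))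
      = ((R n * (Pfn n).totient : ℕ) : ℝ) / (M : ℝ) := by
    intro n hn
    have hn0 : (0 : ℝ) < n := by exact_mod_cast hSpos n hn
    have hPf0 : (0 : ℝ) < Pfn n := by exact_mod_cast Pf_pos (θ n)
    have hR0 : 0 < R n := by
      rcases Nat.eq_zero_or_pos (R n) with h | h
      · exfalso; have := hMeq n hn; rw [h, mul_zero] at this; omega
      · exact h
    have hR0' : (0 : ℝ) < R n := by exact_mod_cast hR0
    have hphi := totient_Pf (θ n)
    have hMr : ((n : ℝ) * Pfn n * R n) = (M : ℝ) := by
      exact_mod_cast congrArg (Nat.cast : ℕ → ℝ) (hMeq n hn)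
    rw [← hMr]
    push_cast
    rw [hphi]
    field_simp
    ring
  rw [Finset.sum_congr rfl hterm, ← Finset.sum_div]
  rw [div_le_one (by exact_mod_cast hM0)]
  calc ∑ n ∈ S, ((R n * (Pfn n).totient : ℕ) : ℝ)
      = ((∑ n ∈ S, R n * (Pfn n).totient : ℕ) : ℝ) := by push_cast; rfl
    _ ≤ (M : ℝ) := by exact_mod_cast hcount

end Stmt5Aux

theorem stmt5 (θ : ℕ → ℝ≥0∞) (hθ : ThetaOK θ) :
    (∀ N : ℕ, 1 ≤ N → ∑ n ∈ Finset.Icc 1 N, Lterm θ n ≤ 1) ∧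
      ∃ L : ℝ, 0 ≤ L ∧ L ≤ 1 ∧ HasSum (Lterm θ) L := by
  have hbound := Stmt5Aux.main_bound θ hθ
  refine ⟨fun N _ => hbound N, ?_⟩
  have hnn := Stmt5Aux.Lterm_nonneg θ
  have h0 : Lterm θ 0 = 0 := by
    rw [Lterm, if_neg (fun h => (lt_irrefl 0 h.1)), zero_mul]
  have hrange : ∀ n : ℕ, ∑ i ∈ Finset.range n, Lterm θ i ≤ 1 := by
    intro n
    have hsub : Finset.range n ⊆ insert 0 (Finset.Icc 1 n) := by
      intro i hi
      rw [Finset.mem_range] at hi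
      rcases Nat.eq_zero_or_pos i with h | h
      · simp [h]
      · rw [Finset.mem_insert, Finset.mem_Icc]; omega
    calc ∑ i ∈ Finset.range n, Lterm θ i
        ≤ ∑ i ∈ insert 0 (Finset.Icc 1 n), Lterm θ i :=
          Finset.sum_le_sum_of_subset_of_nonneg hsub (fun i _ _ => hnn i)
      _ = Lterm θ 0 + ∑ i ∈ Finset.Icc 1 n, Lterm θ i :=
          Finset.sum_insert (by simp)
      _ ≤ 1 := by rw [h0, zero_add]; exact hbound n
  have hsummable : Summable (Lterm θ) := summable_of_sum_range_le hnn hrange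
  refine ⟨∑' n, Lterm θ n, tsum_nonneg hnn, ?_, hsummable.hasSum⟩
  exact Summable.tsum_le_of_sum_range_le hsummable hrange
end
end

section
/- Let θ satisfy θ(1) ≥ 2, θ(n) ≥ P⁺(n) for n ≥ 2. Then the following are equivalent: (a) B(x) ∼ x as x → ∞; (b) L = 0; (c) θ(n) = ∞ for all n ≥ 1; (d) B(x) = ⌊x⌋ for all x, i.e. 𝔅 = ℕ. -/
open scoped Classical ENNReal

noncomputable section

/-! ### Auxiliary machinery -/

/-- The prefix of the factorization of `n` below `p`. -/
def pref (n p : ℕ) : ℕ :=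
  ∏ q ∈ n.primeFactors.filter (fun q => q < p), q ^ (n.factorization q)

lemma bmem_iff (θ : ℕ → ℝ≥0∞) (n : ℕ) :
    Bmem θ n ↔ 0 < n ∧ ∀ p ∈ n.primeFactors, (p : ℝ≥0∞) ≤ θ (pref n p) := Iff.rfl

lemma pref_pos (n p : ℕ) : 0 < pref n p := by
  apply Finset.prod_pos
  intro q hq
  have hq' := Nat.prime_of_mem_primeFactors (Finset.mem_filter.1 hq).1
  exact pow_pos hq'.pos _

lemma pref_mul {m r : ℕ} (q : ℕ) (hm : m ≠ 0) (hr : r ≠ 0)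
    (hq : ∀ b ∈ r.primeFactors, ¬ b < q) : pref (m * r) q = pref m q := by
  unfold pref
  rw [Nat.primeFactors_mul hm hr, Finset.filter_union,
    Finset.filter_false_of_mem hq, Finset.union_empty]
  refine Finset.prod_congr rfl ?_
  intro a ha
  rw [Finset.mem_filter] at ha
  have har : a ∉ r.primeFactors := fun h => hq a h ha.2
  have hr0 : r.factorization a = 0 := by
    rw [← Nat.support_factorization] at har
    exact Finsupp.notMem_support_iff.1 har
  rw [Nat.factorization_mul hm hr]
  simp [hr0]

lemma pref_self {m q : ℕ} (hm : m ≠ 0) (hq : ∀ a ∈ m.primeFactors, a < q) :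
    pref m q = m := by
  unfold pref
  rw [Finset.filter_true_of_mem hq]
  conv_rhs => rw [← Nat.factorization_prod_pow_eq_self hm]
  rw [Finsupp.prod, Nat.support_factorization]

/-- The key construction: if `θ m < ∞` and all prime factors of `r ≥ 2` exceed
`max ⌈θ(m)⌉ P⁺(m)`, then `m * r ∉ 𝔅`. -/
lemma not_bmem_mul (θ : ℕ → ℝ≥0∞) {m r : ℕ} (hm : 0 < m) (hfin : θ m ≠ ∞) (hr : 2 ≤ r)
    (hrT : ∀ b ∈ r.primeFactors, max (⌈(θ m).toReal⌉₊) (maxPrimeFac m) < b) :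
    ¬ Bmem θ (m * r) := by
  intro hB
  have hB2 : ∀ p ∈ (m * r).primeFactors, (p : ℝ≥0∞) ≤ θ (pref (m * r) p) := hB.2
  set p := r.minFac with hp
  have hpp : p.Prime := Nat.minFac_prime (by omega)
  have hpr : p ∈ r.primeFactors := Nat.mem_primeFactors.2 ⟨hpp, r.minFac_dvd, by omega⟩
  have hpmem : p ∈ (m * r).primeFactors := by
    rw [Nat.primeFactors_mul hm.ne' (by omega : r ≠ 0)]
    exact Finset.mem_union_right _ hpr
  have h2 := hB2 p hpmem
  have hpref : pref (m * r) p = m := by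
    rw [pref_mul p hm.ne' (by omega : r ≠ 0) (fun b hb => by
      have hb' := Nat.mem_primeFactors.1 hb
      exact Nat.not_lt.2 (Nat.minFac_le_of_dvd hb'.1.two_le hb'.2.1))]
    refine pref_self hm.ne' (fun a ha => ?_)
    have h1 : a ≤ maxPrimeFac m := Finset.le_sup (f := id) ha
    have h2 : maxPrimeFac m ≤ max (⌈(θ m).toReal⌉₊) (maxPrimeFac m) := le_max_right _ _
    exact lt_of_le_of_lt (h1.trans h2) (hrT p hpr)
  rw [hpref] at h2
  have h3 : (p : ℝ) ≤ (θ m).toReal := by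
    have := ENNReal.toReal_mono hfin h2
    rwa [ENNReal.toReal_natCast] at this
  have h4 : (θ m).toReal ≤ (⌈(θ m).toReal⌉₊ : ℝ) := Nat.le_ceil _
  have h5 : ⌈(θ m).toReal⌉₊ < p :=
    lt_of_le_of_lt (le_max_left _ (maxPrimeFac m)) (hrT p hpr)
  have : (p : ℝ) < p := lt_of_le_of_lt (h3.trans h4) (by exact_mod_cast h5)
  exact lt_irrefl _ this

/-- If every member of `𝔅` has `θ = ∞`, then every positive integer is in `𝔅`. -/
lemma bmem_of_all_inf (θ : ℕ → ℝ≥0∞) (H : ∀ m, Bmem θ m → θ m = ∞) :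
    ∀ n, 0 < n → Bmem θ n := by
  intro n
  induction n using Nat.strong_induction_on with
  | _ n ih =>
  intro hn
  rcases eq_or_lt_of_le (show 1 ≤ n from hn) with h1 | h2
  · refine ⟨hn, fun p hp => ?_⟩
    rw [← h1] at hp
    simp at hp
  · have hne : n.primeFactors.Nonempty := Nat.nonempty_primeFactors.2 h2
    set p := n.primeFactors.max' hne with hpdef
    have hpmem : p ∈ n.primeFactors := n.primeFactors.max'_mem hne
    have hpp : p.Prime := Nat.prime_of_mem_primeFactors hpmem
    set α := n.factorization p with hα
    set m := ordCompl[p] n with hmdef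
    have hn0 : n ≠ 0 := by omega
    have hm0 : 0 < m := Nat.ordCompl_pos p hn0
    have hα0 : 0 < α := hpp.factorization_pos_of_dvd hn0 (Nat.dvd_of_mem_primeFactors hpmem)
    have heq : n = m * p ^ α := by
      rw [hmdef, hα, mul_comm]
      exact (Nat.ordProj_mul_ordCompl_eq_self n p).symm
    have hmfacs : m.primeFactors = n.primeFactors.erase p := by
      rw [← Nat.support_factorization, hmdef, Nat.factorization_ordCompl,
        Finsupp.support_erase, Nat.support_factorization]
    have hmlt : m < n := by
      have h1 : 1 < p ^ α := Nat.one_lt_pow hα0.ne' hpp.one_lt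
      calc m = m * 1 := (mul_one m).symm
        _ < m * p ^ α := Nat.mul_lt_mul_of_le_of_lt (le_refl m) h1 hm0
        _ = n := heq.symm
    have hBm : Bmem θ m := ih m hmlt hm0
    have hθm : θ m = ∞ := H m hBm
    have hmlt_p : ∀ a ∈ m.primeFactors, a < p := by
      intro a ha
      rw [hmfacs, Finset.mem_erase] at ha
      exact lt_of_le_of_ne (Finset.le_max' _ a ha.2) ha.1
    have hppf : (p ^ α).primeFactors = {p} := Nat.primeFactors_prime_pow hα0.ne' hpp
    refine (bmem_iff θ n).2 ⟨hn, fun q hq => ?_⟩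
    rcases eq_or_ne q p with hqp | hqp
    · have : pref n q = m := by
        rw [hqp, heq, pref_mul p hm0.ne' (pow_ne_zero _ hpp.pos.ne')
          (fun b hb => by rw [hppf, Finset.mem_singleton] at hb; omega)]
        exact pref_self hm0.ne' hmlt_p
      rw [this, hθm]
      exact le_top
    · have hqm : q ∈ m.primeFactors := by
        rw [hmfacs, Finset.mem_erase]; exact ⟨hqp, hq⟩
      have hqlep : q ≤ p := Finset.le_max' _ q hq
      have : pref n q = pref m q := by
        rw [heq]
        exact pref_mul q hm0.ne' (pow_ne_zero _ hpp.pos.ne')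
          (fun b hb => by rw [hppf, Finset.mem_singleton] at hb; omega)
      rw [this]
      exact ((bmem_iff θ m).1 hBm).2 q hqm

lemma eulerWeight_pos {y : ℝ≥0∞} (hy : y ≠ ∞) : 0 < eulerWeight y := by
  rw [eulerWeight, if_neg hy]
  apply Finset.prod_pos
  intro p hp
  have hp2 : 2 ≤ p := (Finset.mem_filter.1 hp).2.two_le
  have hppos : (0:ℝ) < p := by positivity
  have : (1:ℝ) / p < 1 := by
    rw [div_lt_one hppos]; exact_mod_cast hp2.trans_lt' one_lt_two
  linarith

lemma eulerWeight_nonneg (y : ℝ≥0∞) : 0 ≤ eulerWeight y := by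
  rcases eq_or_ne y ∞ with h | h
  · rw [eulerWeight, if_pos h]
  · exact (eulerWeight_pos h).le

lemma Lterm_nonneg (θ : ℕ → ℝ≥0∞) (n : ℕ) : 0 ≤ Lterm θ n := by
  unfold Lterm
  apply mul_nonneg _ (eulerWeight_nonneg _)
  split <;> positivity

/-- (c) implies (d). -/
lemma bcount_of_inf (θ : ℕ → ℝ≥0∞) (hC : ∀ n : ℕ, 1 ≤ n → θ n = ∞) (x : ℝ) :
    Bcount θ x = ⌊x⌋₊ := by
  rw [Bcount]
  have hall : ∀ n ∈ Finset.Icc 1 ⌊x⌋₊, Bmem θ n := by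
    intro n hn
    refine ⟨(Finset.mem_Icc.1 hn).1, fun p hp => ?_⟩
    show (p : ℝ≥0∞) ≤ θ (pref n p)
    rw [hC _ (pref_pos n p)]
    exact le_top
  rw [Finset.filter_true_of_mem hall, Nat.card_Icc]
  omega

/-- (d) implies (c). -/
lemma inf_of_bcount (θ : ℕ → ℝ≥0∞) (hd : ∀ x : ℝ, Bcount θ x = ⌊x⌋₊) :
    ∀ n : ℕ, 1 ≤ n → θ n = ∞ := by
  by_contra h
  push_neg at h
  obtain ⟨m, hm1, hmfin⟩ := h
  set T := max (⌈(θ m).toReal⌉₊) (maxPrimeFac m) with hT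
  obtain ⟨p, hpT, hpp⟩ := Nat.exists_infinite_primes (T + 1)
  have hnot : ¬ Bmem θ (m * p) := by
    refine not_bmem_mul θ hm1 hmfin hpp.two_le (fun b hb => ?_)
    rw [hpp.primeFactors, Finset.mem_singleton] at hb
    subst hb; omega
  have hx := hd ((m * p : ℕ) : ℝ)
  rw [Nat.floor_natCast, Bcount, Nat.floor_natCast] at hx
  have hsub := Finset.filter_subset (fun n => Bmem θ n) (Finset.Icc 1 (m * p))
  have hcard : (Finset.Icc 1 (m * p)).card ≤
      ((Finset.Icc 1 (m * p)).filter (fun n => Bmem θ n)).card := by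
    rw [hx, Nat.card_Icc]
    omega
  have heq := Finset.eq_of_subset_of_card_le hsub hcard
  have hmp : 0 < m * p := Nat.mul_pos hm1 hpp.pos
  have hmem : (m * p) ∈ (Finset.Icc 1 (m * p)).filter (fun n => Bmem θ n) := by
    rw [heq]; exact Finset.mem_Icc.2 ⟨hmp, le_refl _⟩
  exact hnot (Finset.mem_filter.1 hmem).2

/-- (b) implies (c), given the sum. -/
lemma inf_of_L_zero (θ : ℕ → ℝ≥0∞) (hL : HasSum (Lterm θ) 0) :
    ∀ n : ℕ, 1 ≤ n → θ n = ∞ := by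
  have hzero : Lterm θ = 0 := (hasSum_zero_iff_of_nonneg (Lterm_nonneg θ)).1 hL
  have H : ∀ m, Bmem θ m → θ m = ∞ := by
    intro m hm
    by_contra hfin
    have h1 : Lterm θ m = 0 := congrFun hzero m
    rw [Lterm, if_pos hm] at h1
    have h2 : (0:ℝ) < 1 / m := by
      have := hm.1; positivity
    have h3 := eulerWeight_pos hfin
    nlinarith
  intro n hn
  exact H n (bmem_of_all_inf θ H n hn)

/-- (c) implies (b). -/
lemma L_zero_of_inf (θ : ℕ → ℝ≥0∞) (L : ℝ) (hL : HasSum (Lterm θ) L)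
    (hC : ∀ n : ℕ, 1 ≤ n → θ n = ∞) : L = 0 := by
  have : Lterm θ = 0 := by
    funext n
    show Lterm θ n = 0
    rcases Nat.eq_zero_or_pos n with h | h
    · subst h
      rw [Lterm, if_neg (fun hb => lt_irrefl 0 hb.1)]
      ring
    · rw [Lterm, hC n h, eulerWeight, if_pos rfl, mul_zero]
  rw [this] at hL
  exact hL.unique hasSum_zero

/-- the floor ratio tends to one -/
lemma floor_div_tendsto_one :
    Filter.Tendsto (fun x : ℝ => (⌊x⌋₊ : ℝ) / x) Filter.atTop (nhds 1) := by
  have hlo : Filter.Tendsto (fun x : ℝ => 1 - x⁻¹) Filter.atTop (nhds 1) := by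
    have h1 : Filter.Tendsto (fun x : ℝ => 1 - x⁻¹) Filter.atTop (nhds (1 - 0)) :=
      Filter.Tendsto.sub tendsto_const_nhds tendsto_inv_atTop_zero
    simpa using h1
  refine tendsto_of_tendsto_of_tendsto_of_le_of_le' hlo tendsto_const_nhds ?_ ?_
  · filter_upwards [Filter.eventually_ge_atTop (1:ℝ)] with x hx
    have hx0 : (0:ℝ) < x := by linarith
    have h1 : x - 1 ≤ (⌊x⌋₊ : ℝ) := (Nat.sub_one_lt_floor x).le
    have h2 : (1:ℝ) - x⁻¹ = (x - 1) / x := by field_simp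
    rw [h2]
    gcongr
  · filter_upwards [Filter.eventually_ge_atTop (1:ℝ)] with x hx
    rw [div_le_one (by linarith)]
    exact Nat.floor_le (by linarith)

/-- (a) implies (c). -/
lemma inf_of_equiv (θ : ℕ → ℝ≥0∞)
    (ha : Asymptotics.IsEquivalent Filter.atTop
      (fun x : ℝ => (Bcount θ x : ℝ)) (fun x : ℝ => x)) :
    ∀ n : ℕ, 1 ≤ n → θ n = ∞ := by
  by_contra h
  push_neg at h
  obtain ⟨m, hm1, hmfin⟩ := h
  set T := max (⌈(θ m).toReal⌉₊) (maxPrimeFac m) with hT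
  set F := T.factorial with hF
  have hFpos : 0 < F := T.factorial_pos
  set Q := m * F with hQ
  have hQpos : 0 < Q := Nat.mul_pos hm1 hFpos
  have hbad : ∀ k, 1 ≤ k → ¬ Bmem θ (m + k * Q) := by
    intro k hk
    have hkF : 0 < k * F := Nat.mul_pos hk hFpos
    have hEq : m + k * Q = m * (1 + k * F) := by rw [hQ]; ring
    rw [hEq]
    refine not_bmem_mul θ hm1 hmfin (by omega) ?_
    intro b hb
    have hbp := Nat.prime_of_mem_primeFactors hb
    have hbdvd := Nat.dvd_of_mem_primeFactors hb
    by_contra hble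
    push_neg at hble
    have hbF : b ∣ F := Nat.dvd_factorial hbp.pos hble
    have h2 : b ∣ k * F := hbF.mul_left k
    rw [add_comm] at hbdvd
    have hb1 : b ∣ 1 := (Nat.dvd_add_right h2).1 hbdvd
    exact hbp.one_lt.ne' (Nat.dvd_one.1 hb1)
  have hcount : ∀ N : ℕ, ((Finset.Icc 1 N).filter (fun n => Bmem θ n)).card
      ≤ N - (N - m)/Q ∧ (N - m)/Q ≤ N := by
    intro N
    set K := (N - m)/Q with hK
    have hKle : K ≤ N := le_trans (Nat.div_le_self _ _) (Nat.sub_le _ _)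
    set Bad := (Finset.Icc 1 K).image (fun k => m + k * Q) with hBad
    have hinj : Set.InjOn (fun k => m + k * Q) ↑(Finset.Icc 1 K) := by
      intro a _ b _ hab
      simp only at hab
      have : a * Q = b * Q := Nat.add_left_cancel hab
      exact Nat.eq_of_mul_eq_mul_right hQpos this
    have hcardBad : Bad.card = K := by
      rw [hBad, Finset.card_image_of_injOn hinj, Nat.card_Icc]
      exact Nat.add_sub_cancel K 1
    have hsub : Bad ⊆ Finset.Icc 1 N := by
      intro n hn
      rw [hBad, Finset.mem_image] at hn
      obtain ⟨k, hk, rfl⟩ := hn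
      rw [Finset.mem_Icc] at hk
      have h1 : k * Q ≤ K * Q := Nat.mul_le_mul_right _ hk.2
      have h2 : K * Q ≤ N - m := Nat.div_mul_le_self _ _
      have h3 : 1 * Q ≤ k * Q := Nat.mul_le_mul_right _ hk.1
      rw [Finset.mem_Icc]
      constructor
      · omega
      · have h4 : 0 < Q := hQpos
        omega
    have hfsub : (Finset.Icc 1 N).filter (fun n => Bmem θ n)
        ⊆ (Finset.Icc 1 N) \ Bad := by
      intro n hn
      rw [Finset.mem_filter] at hn
      rw [Finset.mem_sdiff]
      refine ⟨hn.1, fun hnBad => ?_⟩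
      rw [hBad, Finset.mem_image] at hnBad
      obtain ⟨k, hk, rfl⟩ := hnBad
      exact hbad k (Finset.mem_Icc.1 hk).1 hn.2
    have hcc := Finset.card_le_card hfsub
    rw [Finset.card_sdiff_of_subset hsub, hcardBad, Nat.card_Icc] at hcc
    exact ⟨by omega, hKle⟩
  have hz : ∀ᶠ x : ℝ in Filter.atTop, (fun x : ℝ => x) x ≠ 0 :=
    Filter.eventually_ne_atTop 0
  have hTend : Filter.Tendsto (fun x : ℝ => (Bcount θ x : ℝ) / x)
      Filter.atTop (nhds 1) :=
    (Asymptotics.isEquivalent_iff_tendsto_one hz).1 ha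
  have hEvBound : ∀ᶠ x : ℝ in Filter.atTop,
      (Bcount θ x : ℝ) / x ≤ 1 - 1/(2*(Q:ℝ)) := by
    rw [Filter.eventually_atTop]
    refine ⟨((2*(m + Q + 1) : ℕ) : ℝ), fun x hx => ?_⟩
    have hxpos : (0:ℝ) < x := by
      have h0 : (0:ℝ) < ((2*(m + Q + 1) : ℕ) : ℝ) := by
        exact_mod_cast (by positivity : 0 < 2*(m + Q + 1))
      linarith
    set N := ⌊x⌋₊ with hN
    obtain ⟨hc, hKN⟩ := hcount N
    have hNx : (N:ℝ) ≤ x := Nat.floor_le hxpos.le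
    have hxN : x - 1 < (N:ℝ) := Nat.sub_one_lt_floor x
    set K := (N - m)/Q with hK
    have hBe : Bcount θ x = ((Finset.Icc 1 N).filter (fun n => Bmem θ n)).card := rfl
    have hcR : (Bcount θ x : ℝ) ≤ (N:ℝ) - K := by
      rw [hBe]
      calc (((Finset.Icc 1 N).filter (fun n => Bmem θ n)).card : ℝ)
          ≤ ((N - K : ℕ) : ℝ) := Nat.cast_le.2 hc
        _ = (N:ℝ) - K := by rw [Nat.cast_sub hKN]
    have hKlow : (N:ℝ) - m < (K:ℝ)*Q + Q := by
      have h1 : (N - m : ℕ) < K*Q + Q := by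
        rw [hK]
        exact Nat.lt_div_mul_add hQpos
      have h2 : (N:ℝ) - m ≤ ((N - m : ℕ):ℝ) := by
        rcases le_or_gt m N with h | h
        · rw [Nat.cast_sub h]
        · have h3 : N - m = 0 := by omega
          have h4 : (N:ℝ) < m := by exact_mod_cast h
          rw [h3]
          push_cast
          linarith
      calc (N:ℝ) - m ≤ ((N - m : ℕ):ℝ) := h2
        _ < ((K*Q + Q : ℕ):ℝ) := by exact_mod_cast h1
        _ = (K:ℝ)*Q + Q := by push_cast; ring
    have hQR : (1:ℝ) ≤ (Q:ℝ) := by exact_mod_cast hQpos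
    have hmR : (1:ℝ) ≤ (m:ℝ) := by exact_mod_cast hm1
    have hxlarge : 2*((m:ℝ) + Q + 1) ≤ x := by
      have : ((2*(m + Q + 1) : ℕ) : ℝ) = 2*((m:ℝ) + Q + 1) := by push_cast; ring
      linarith [hx, this.symm.le, this.le]
    have hKx : 1/(2*(Q:ℝ)) ≤ (K:ℝ)/x := by
      rw [div_le_div_iff₀ (by positivity) hxpos]
      nlinarith [hKlow, hxN, hxlarge]
    calc (Bcount θ x : ℝ)/x ≤ ((N:ℝ) - K)/x := by gcongr
      _ ≤ (x - K)/x := by gcongr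
      _ = 1 - (K:ℝ)/x := by field_simp
      _ ≤ 1 - 1/(2*(Q:ℝ)) := by linarith [hKx]
  have h1le : (1:ℝ) ≤ 1 - 1/(2*(Q:ℝ)) := le_of_tendsto hTend hEvBound
  have hQR : (0:ℝ) < (Q:ℝ) := by exact_mod_cast hQpos
  have : (0:ℝ) < 1/(2*(Q:ℝ)) := by positivity
  linarith

theorem stmt7 (θ : ℕ → ℝ≥0∞) (hθ : ThetaOK θ) (L : ℝ) (hL : HasSum (Lterm θ) L) :
    (Asymptotics.IsEquivalent Filter.atTop (fun x : ℝ => (Bcount θ x : ℝ)) (fun x : ℝ => x)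
        ↔ L = 0) ∧
      (L = 0 ↔ ∀ n : ℕ, 1 ≤ n → θ n = ∞) ∧
      ((∀ n : ℕ, 1 ≤ n → θ n = ∞) ↔ ∀ x : ℝ, Bcount θ x = ⌊x⌋₊) := by
  have hbc : (L = 0) ↔ (∀ n : ℕ, 1 ≤ n → θ n = ∞) := by
    constructor
    · intro h0
      subst h0
      exact inf_of_L_zero θ hL
    · exact L_zero_of_inf θ L hL
  have hcd : (∀ n : ℕ, 1 ≤ n → θ n = ∞) ↔ ∀ x : ℝ, Bcount θ x = ⌊x⌋₊ :=
    ⟨bcount_of_inf θ, inf_of_bcount θ⟩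
  refine ⟨?_, hbc, hcd⟩
  constructor
  · intro ha
    exact hbc.2 (inf_of_equiv θ ha)
  · intro h0
    have hd := hcd.1 (hbc.1 h0)
    have hz : ∀ᶠ x : ℝ in Filter.atTop, (fun x : ℝ => x) x ≠ 0 :=
      Filter.eventually_ne_atTop 0
    rw [Asymptotics.isEquivalent_iff_tendsto_one hz]
    have heq : (fun x : ℝ => (Bcount θ x : ℝ)) = (fun x : ℝ => (⌊x⌋₊ : ℝ)) :=
      funext fun x => by rw [hd x]
    show Filter.Tendsto ((fun x : ℝ => (Bcount θ x : ℝ)) / (fun x : ℝ => x))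
      Filter.atTop (nhds 1)
    rw [heq]
    exact floor_div_tendsto_one
end
end

section
/- Let θ satisfy θ(1) ≥ 2, θ(n) ≥ P⁺(n) for n ≥ 2, and suppose θ(2^r n) ≥ 2^r · θ'(n) for some fixed r and all n, where θ'(n) = 2n. Then if n ∈ 𝔅_{θ'}, we have 2^r n ∈ 𝔅_θ; consequently B_θ(x) ≥ B_{θ'}(x/2^r). -/
open scoped Classical ENNReal

noncomputable section

lemma prefixRange (m p : ℕ) :
    ∏ q ∈ m.primeFactors.filter (fun q => q < p), q ^ (m.factorization q)
      = ∏ q ∈ Finset.range p, q ^ (m.factorization q) := by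
  apply Finset.prod_subset
  · intro q hq
    rw [Finset.mem_filter] at hq
    exact Finset.mem_range.mpr hq.2
  · intro q hq hq'
    have h0 : m.factorization q = 0 := by
      by_contra h
      exact hq' (Finset.mem_filter.mpr ⟨by
        rw [← Nat.support_factorization]; exact Finsupp.mem_support_iff.mpr h,
        Finset.mem_range.mp hq⟩)
    simp [h0]

lemma prefixMul (a b p : ℕ) (ha : a ≠ 0) (hb : b ≠ 0) :
    ∏ q ∈ Finset.range p, q ^ ((a * b).factorization q)
      = (∏ q ∈ Finset.range p, q ^ (a.factorization q)) *
        ∏ q ∈ Finset.range p, q ^ (b.factorization q) := by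
  rw [Nat.factorization_mul ha hb, ← Finset.prod_mul_distrib]
  exact Finset.prod_congr rfl fun q _ => by simp [pow_add]

lemma prefixTwoPow (r p : ℕ) (hp : 2 < p) :
    ∏ q ∈ Finset.range p, q ^ ((2 ^ r : ℕ).factorization q) = 2 ^ r := by
  rw [Finset.prod_eq_single 2]
  · simp [Nat.Prime.factorization_pow Nat.prime_two]
  · intro q _ hq
    rw [Nat.Prime.factorization_pow Nat.prime_two]
    simp [Finsupp.single_apply, Ne.symm hq]
  · intro h; exact absurd (Finset.mem_range.mpr hp) h

theorem stmt11 (θ : ℕ → ℝ≥0∞) (hθ : ThetaOK θ) (r : ℕ)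
    (hr : ∀ n : ℕ, 1 ≤ n → ((2 ^ r : ℕ) : ℝ≥0∞) * (2 * n) ≤ θ (2 ^ r * n)) :
    (∀ n, Bmem (fun m => (2 * m : ℝ≥0∞)) n → Bmem θ (2 ^ r * n)) ∧
      ∀ x : ℝ, Bcount (fun m => (2 * m : ℝ≥0∞)) (x / 2 ^ r) ≤ Bcount θ x := by
  have main : ∀ n, Bmem (fun m => (2 * m : ℝ≥0∞)) n → Bmem θ (2 ^ r * n) := by
    intro n hn
    obtain ⟨hnpos, hmem⟩ := hn
    have hne : n ≠ 0 := hnpos.ne'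
    have h2r : (2 ^ r : ℕ) ≠ 0 := (Nat.two_pow_pos r).ne'
    refine ⟨Nat.mul_pos (Nat.pos_of_ne_zero h2r) hnpos, ?_⟩
    intro p hp
    have hpp : p.Prime := Nat.prime_of_mem_primeFactors hp
    by_cases hp2 : p = 2
    · -- prefix below 2 is 1
      have hfil : (2 ^ r * n).primeFactors.filter (fun q => q < p) = ∅ := by
        apply Finset.filter_false_of_mem
        intro q hq
        have := (Nat.prime_of_mem_primeFactors hq).two_le
        omega
      rw [hfil]
      simpa [hp2] using hθ.1
    · have hplt : 2 < p := lt_of_le_of_ne hpp.two_le (Ne.symm hp2)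
      have hpn : p ∈ n.primeFactors := by
        rw [Nat.mem_primeFactors] at hp ⊢
        refine ⟨hpp, ?_, hne⟩
        have hcop : Nat.Coprime p (2 ^ r) :=
          Nat.Coprime.pow_right r ((Nat.coprime_primes hpp Nat.prime_two).mpr hp2)
        exact (Nat.Coprime.dvd_of_dvd_mul_left hcop hp.2.1)
      set P := ∏ q ∈ n.primeFactors.filter (fun q => q < p), q ^ (n.factorization q) with hP
      have hPpos : 1 ≤ P := by
        apply Finset.one_le_prod'
        intro q hq
        exact Nat.one_le_pow _ _ (Nat.prime_of_mem_primeFactors (Finset.mem_filter.mp hq).1).pos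
      have hpre : ∏ q ∈ (2 ^ r * n).primeFactors.filter (fun q => q < p),
          q ^ ((2 ^ r * n).factorization q) = 2 ^ r * P := by
        rw [prefixRange, prefixMul _ _ _ h2r hne, prefixTwoPow _ _ hplt, hP, prefixRange]
      rw [hpre]
      have h1 := hmem p hpn
      have h2 := hr P hPpos
      calc (p : ℝ≥0∞) ≤ 2 * P := h1
        _ ≤ ((2 ^ r : ℕ) : ℝ≥0∞) * (2 * P) := by
            refine le_mul_of_one_le_left' ?_
            exact_mod_cast Nat.one_le_two_pow
        _ ≤ θ (2 ^ r * P) := h2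
  refine ⟨main, ?_⟩
  intro x
  unfold Bcount
  apply Finset.card_le_card_of_injOn (fun n => 2 ^ r * n)
  · intro n hn
    rw [Finset.mem_coe, Finset.mem_filter, Finset.mem_Icc] at hn
    obtain ⟨⟨hn1, hn2⟩, hnB⟩ := hn
    rw [Finset.mem_coe, Finset.mem_filter, Finset.mem_Icc]
    refine ⟨⟨Nat.one_le_iff_ne_zero.mpr (by have : n ≠ 0 := Nat.one_le_iff_ne_zero.mp hn1; positivity), ?_⟩, main n hnB⟩
    · have hx : (1 : ℝ) ≤ x / 2 ^ r := by
        have := Nat.le_floor_iff' (n := n) (Nat.one_le_iff_ne_zero.mp hn1) |>.mp hn2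
        calc (1 : ℝ) ≤ n := by exact_mod_cast hn1
          _ ≤ _ := this
      have h2r' : (0:ℝ) < 2 ^ r := by positivity
      have hx0 : (0:ℝ) ≤ x := by
        have := (one_le_div h2r').mp hx
        linarith
      rw [Nat.le_floor_iff hx0]
      have hfl : (⌊x / 2 ^ r⌋₊ : ℝ) ≤ x / 2 ^ r :=
        Nat.floor_le (by linarith : (0:ℝ) ≤ x / 2 ^ r)
      have : (2 ^ r : ℝ) * ⌊x / 2 ^ r⌋₊ ≤ x := by
        rw [mul_comm]
        calc (⌊x / 2 ^ r⌋₊ : ℝ) * 2 ^ r ≤ (x / 2 ^ r) * 2 ^ r := by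
              apply mul_le_mul_of_nonneg_right hfl (by positivity)
          _ = x := by field_simp
      push_cast
      calc ((2:ℝ) ^ r) * n ≤ (2 ^ r : ℝ) * ⌊x / 2 ^ r⌋₊ := by
            apply mul_le_mul_of_nonneg_left (by exact_mod_cast hn2) (by positivity)
        _ ≤ x := this
  · intro a _ b _ hab
    exact Nat.eq_of_mul_eq_mul_left (Nat.two_pow_pos r) hab
end
end
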